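/- arXiv:1303.7099 — 3 statements merged into one kernel-verified Lean document; each statement's English description precedes it below -/
import Mathlib

section
/- Let γ ∈ SL(d+1, ℝ) preserve a sharp (properly) convex open cone C ⊂ ℝ^{d+1}. Then the spectral radius ρ of γ is an eigenvalue of γ (i.e., γ is positively semi-proximal). -/
open Filter Topology

theorem sharp_cone_functional {E : Type*} [NormedAddCommGroup E] [NormedSpace ℝ E]
    [FiniteDimensional ℝ E] (K : Set E) (hKc : IsClosed K) (hKconv : Convex ℝ K)
    (hKsmul : ∀ s : ℝ, 0 < s → ∀ x ∈ K, s • x ∈ K) (h0 : (0:E) ∈ K)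
    (hKne : ∃ x ∈ K, x ≠ 0)
    (hsharp : ∀ x ∈ K, x ≠ 0 → -x ∉ K) :
    ∃ f : E →L[ℝ] ℝ, ∃ c : ℝ, 0 < c ∧ ∀ x ∈ K, c * ‖x‖ ≤ f x := by
  classical
  set S : Set E := K ∩ Metric.sphere 0 1 with hS
  have hScomp : IsCompact S := (isCompact_sphere 0 1).inter_left hKc
  have hnorm : ∀ x ∈ K, x ≠ 0 → (‖x‖⁻¹ • x) ∈ S := by
    intro x hx hx0
    have hn : 0 < ‖x‖ := norm_pos_iff.mpr hx0
    refine ⟨hKsmul _ (inv_pos.mpr hn) x hx, ?_⟩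
    simp [norm_smul, abs_of_pos (inv_pos.mpr hn), inv_mul_cancel₀ hn.ne']
  have hSne : S.Nonempty := by
    obtain ⟨x, hx, hx0⟩ := hKne
    exact ⟨_, hnorm x hx hx0⟩
  have hpt : ∀ x ∈ S, ∃ f : E →L[ℝ] ℝ, (∀ y ∈ K, 0 ≤ f y) ∧ 0 < f x := by
    intro x hxS
    have hx0 : x ≠ 0 := by
      intro h; have := hxS.2; rw [h] at this; simp at this
    have hnx : -x ∉ K := hsharp x hxS.1 hx0
    obtain ⟨f, u, hfu, hub⟩ := geometric_hahn_banach_point_closed hKconv hKc hnx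
    have hu0 : u < 0 := by simpa using hub 0 h0
    refine ⟨f, ?_, ?_⟩
    · intro y hy
      by_contra hneg
      push_neg at hneg
      have ht : 0 < u / f y := div_pos_of_neg_of_neg hu0 hneg
      have := hub _ (hKsmul _ ht y hy)
      rw [map_smul] at this
      simp only [smul_eq_mul] at this
      rw [div_mul_cancel₀ _ hneg.ne] at this
      exact lt_irrefl _ this
    · have : -f x < u := by simpa using hfu
      linarith
  -- extract functionals by choice and use compactness
  choose! F hF1 hF2 using hpt
  have hcover : S ⊆ ⋃ x : S, {y | 0 < F x y} := by
    intro y hy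
    exact Set.mem_iUnion.mpr ⟨⟨y, hy⟩, hF2 y hy⟩
  obtain ⟨t, ht⟩ := hScomp.elim_finite_subcover (fun x : S => {y | 0 < F x y})
    (fun x => isOpen_lt continuous_const (F x).continuous) hcover
  set f : E →L[ℝ] ℝ := ∑ x ∈ t, F x with hf
  have hfK : ∀ y ∈ K, 0 ≤ f y := by
    intro y hy
    simp only [hf, ContinuousLinearMap.coe_sum', Finset.sum_apply]
    exact Finset.sum_nonneg fun x _ => hF1 x x.2 y hy
  have hfS : ∀ y ∈ S, 0 < f y := by
    intro y hy
    obtain ⟨x, hxt, hxy⟩ := Set.mem_iUnion₂.mp (ht hy)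
    simp only [hf, ContinuousLinearMap.coe_sum', Finset.sum_apply]
    refine Finset.sum_pos' (fun x' _ => hF1 x' x'.2 y hy.1) ⟨x, hxt, hxy⟩
  -- minimum of f on compact S
  obtain ⟨x₀, hx₀S, hx₀min⟩ := hScomp.exists_isMinOn hSne f.continuous.continuousOn
  refine ⟨f, f x₀, hfS x₀ hx₀S, ?_⟩
  intro x hx
  rcases eq_or_ne x 0 with rfl | hx0
  · simp
  · have hn : 0 < ‖x‖ := norm_pos_iff.mpr hx0
    have hmem := hnorm x hx hx0
    have := hx₀min hmem
    have h1 : f x₀ ≤ f (‖x‖⁻¹ • x) := this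
    rw [map_smul, smul_eq_mul] at h1
    calc f x₀ * ‖x‖ ≤ (‖x‖⁻¹ * f x) * ‖x‖ := by nlinarith
    _ = f x := by field_simp

open Filter Topology

attribute [local instance] Matrix.linftyOpNormedRing Matrix.linftyOpNormedAlgebra

theorem matrix_pow_norm_le {m : ℕ} (B : Matrix (Fin (m+1)) (Fin (m+1)) ℂ)
    (ρ : ℝ) (hρ : 0 ≤ ρ) (hspec : ∀ μ ∈ spectrum ℂ B, ‖μ‖ ≤ ρ)
    (s : ℝ) (hs : ρ < s) : ∀ᶠ n in atTop, ‖B ^ n‖ ≤ s ^ n := by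
  have hs0 : 0 < s := hρ.trans_lt hs
  have hsr : spectralRadius ℂ B ≤ ENNReal.ofReal ρ := by
    rw [spectralRadius]
    refine iSup₂_le fun k hk => ?_
    simp only [← enorm_eq_nnnorm, ← ofReal_norm]
    exact ENNReal.ofReal_le_ofReal (hspec k hk)
  have hgel := spectrum.pow_nnnorm_pow_one_div_tendsto_nhds_spectralRadius B
  have hlt : spectralRadius ℂ B < ENNReal.ofReal s :=
    lt_of_le_of_lt hsr ((ENNReal.ofReal_lt_ofReal_iff hs0).mpr hs)
  have hev := hgel.eventually_lt_const hlt
  filter_upwards [hev, Filter.eventually_ge_atTop 1] with n hn hn1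
  have hne : (n : ℝ) ≠ 0 := by positivity
  set x : ENNReal := (‖B ^ n‖₊ : ENNReal) with hxdef
  have hx : (x ^ (1 / (n:ℝ))) ^ (n:ℝ) < (ENNReal.ofReal s) ^ (n:ℝ) :=
    ENNReal.rpow_lt_rpow hn (by positivity)
  rw [← ENNReal.rpow_mul, one_div, inv_mul_cancel₀ hne, ENNReal.rpow_one] at hx
  have hxs : x < ENNReal.ofReal (s ^ n) := by
    calc x < ENNReal.ofReal s ^ ((n:ℕ):ℝ) := hx
    _ = ENNReal.ofReal (s ^ ((n:ℕ):ℝ)) := ENNReal.ofReal_rpow_of_pos hs0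
    _ = ENNReal.ofReal (s ^ n) := by rw [Real.rpow_natCast]
  have : ‖B ^ n‖ ≤ s ^ n := by
    have := hxs.le
    rw [hxdef] at this; simp only [← enorm_eq_nnnorm, ← ofReal_norm] at this
    exact (ENNReal.ofReal_le_ofReal_iff (by positivity)).mp this
  exact this

set_option maxHeartbeats 2000000 in
/-- If `γ ∈ SL(d+1, ℝ)` preserves a nonempty sharp open convex cone `C ⊆ ℝ^{d+1}`, then the
spectral radius `ρ` of `γ` (the maximum of the moduli of its complex eigenvalues) is itself a
(real) eigenvalue of `γ`: `γ` is positively semi-proximal. -/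
theorem preserves_sharp_cone_positively_semiproximal {d : ℕ}
    (γ : Matrix.SpecialLinearGroup (Fin (d + 1)) ℝ)
    (C : Set (Fin (d + 1) → ℝ)) (hne : C.Nonempty)
    (ho : IsOpen C) (hconv : Convex ℝ C)
    (hcone : ∀ t : ℝ, 0 < t → ∀ x ∈ C, t • x ∈ C)
    (hsharp : ∀ x : Fin (d + 1) → ℝ, x ≠ 0 → x ∈ closure C → -x ∉ closure C)
    (hpres : Matrix.toLin' (γ : Matrix (Fin (d + 1)) (Fin (d + 1)) ℝ) '' C = C)
    (ρ : ℝ)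
    (hmax : ∀ μ : ℂ, Module.End.HasEigenvalue
      (Matrix.toLin' ((γ : Matrix (Fin (d + 1)) (Fin (d + 1)) ℝ).map (algebraMap ℝ ℂ))) μ →
      ‖μ‖ ≤ ρ)
    (hattain : ∃ μ : ℂ, Module.End.HasEigenvalue
      (Matrix.toLin' ((γ : Matrix (Fin (d + 1)) (Fin (d + 1)) ℝ).map (algebraMap ℝ ℂ))) μ ∧
      ‖μ‖ = ρ) :
    Module.End.HasEigenvalue
      (Matrix.toLin' (γ : Matrix (Fin (d + 1)) (Fin (d + 1)) ℝ)) ρ := by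
  classical
  set A : Matrix (Fin (d + 1)) (Fin (d + 1)) ℝ := (γ : Matrix (Fin (d + 1)) (Fin (d + 1)) ℝ)
    with hAdef
  set B : Matrix (Fin (d + 1)) (Fin (d + 1)) ℂ := A.map (algebraMap ℝ ℂ) with hBdef
  set K : Set (Fin (d + 1) → ℝ) := closure C with hKdef
  obtain ⟨u₀, hu₀⟩ := hne
  -- basic cone facts
  have hKc : IsClosed K := isClosed_closure
  have hKconv : Convex ℝ K := hconv.closure
  have hKsmul : ∀ s : ℝ, 0 < s → ∀ x ∈ K, s • x ∈ K := by
    intro s hs x hx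
    have h1 : (s • ·) '' closure C ⊆ closure ((s • ·) '' C) :=
      image_closure_subset_closure_image (continuous_const_smul s)
    have h2 : (s • ·) '' C ⊆ C := by
      rintro _ ⟨y, hy, rfl⟩; exact hcone s hs y hy
    exact closure_mono h2 (h1 ⟨x, hx, rfl⟩)
  have h0K : (0 : Fin (d+1) → ℝ) ∈ K := by
    have ht : Filter.Tendsto (fun k : ℕ => (1 / ((k:ℝ)+1)) • u₀) Filter.atTop
        (nhds ((0:ℝ) • u₀)) :=
      tendsto_one_div_add_atTop_nhds_zero_nat.smul_const u₀
    rw [zero_smul] at ht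
    exact mem_closure_of_tendsto ht (Filter.Eventually.of_forall fun k =>
      hcone _ (by positivity) u₀ hu₀)
  have hCadd : ∀ x ∈ C, ∀ y ∈ C, x + y ∈ C := by
    intro x hx y hy
    have hmid : (1/2 : ℝ) • x + (1/2 : ℝ) • y ∈ C :=
      hconv hx hy (by norm_num) (by norm_num) (by norm_num)
    have := hcone 2 (by norm_num) _ hmid
    rwa [smul_add, smul_smul, smul_smul, (by norm_num : (2:ℝ) * (1/2) = 1), one_smul,
      one_smul] at this
  have hCA : ∀ x ∈ C, A.mulVec x ∈ C := by
    intro x hx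
    have : Matrix.toLin' A x ∈ Matrix.toLin' A '' C := Set.mem_image_of_mem _ hx
    rw [hpres] at this
    rwa [Matrix.toLin'_apply] at this
  have hKA : ∀ x ∈ K, A.mulVec x ∈ K := by
    intro x hx
    have hcont : Continuous fun y => A.mulVec y :=
      (Matrix.mulVecLin A).continuous_of_finiteDimensional
    have h1 : (fun y => A.mulVec y) '' closure C ⊆ closure ((fun y => A.mulVec y) '' C) :=
      image_closure_subset_closure_image hcont
    have h2 : (fun y => A.mulVec y) '' C ⊆ C := by
      rintro _ ⟨y, hy, rfl⟩; exact hCA y hy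
    exact closure_mono h2 (h1 ⟨x, hx, rfl⟩)
  have hCpow : ∀ n : ℕ, ∀ x ∈ C, (A ^ n).mulVec x ∈ C := by
    intro n
    induction n with
    | zero => intro x hx; simpa [Matrix.one_mulVec] using hx
    | succ n ih =>
      intro x hx
      rw [pow_succ', ← Matrix.mulVec_mulVec]
      exact hCA _ (ih x hx)
  have hKpow : ∀ n : ℕ, ∀ x ∈ K, (A ^ n).mulVec x ∈ K := by
    intro n
    induction n with
    | zero => intro x hx; simpa [Matrix.one_mulVec] using hx
    | succ n ih =>
      intro x hx
      rw [pow_succ', ← Matrix.mulVec_mulVec]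
      exact hKA _ (ih x hx)
  have hsharpK : ∀ x ∈ K, x ≠ 0 → -x ∉ K := fun x hx h0 => hsharp x h0 hx
  have hKne : ∃ x ∈ K, x ≠ 0 := by
    rcases eq_or_ne u₀ 0 with rfl | h
    · obtain ⟨ε, hε, hball⟩ := Metric.isOpen_iff.mp ho 0 hu₀
      refine ⟨fun _ => ε/2, subset_closure (hball ?_), ?_⟩
      · rw [Metric.mem_ball, dist_zero_right]
        have hle : ‖(fun _ => ε/2 : Fin (d+1) → ℝ)‖ ≤ ε/2 :=
          (pi_norm_le_iff_of_nonneg (by positivity)).mpr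
            (fun i => by rw [Real.norm_eq_abs, abs_of_pos (by positivity : (0:ℝ) < ε/2)])
        linarith
      · intro hcontra
        have h2 : ε / 2 = 0 := congrFun hcontra 0
        linarith
    · exact ⟨u₀, subset_closure hu₀, h⟩
  obtain ⟨f, c, hc, hfK⟩ := sharp_cone_functional K hKc hKconv hKsmul h0K hKne hsharpK
  have hfK0 : ∀ x ∈ K, 0 ≤ f x := fun x hx => le_trans (by positivity) (hfK x hx)
  -- small ball around u₀
  obtain ⟨δ, hδ, hball⟩ := Metric.isOpen_iff.mp ho u₀ hu₀
  set dd : ℝ := δ / 2 with hdddef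
  have hdd : 0 < dd := by positivity
  have hballC : ∀ v : Fin (d+1) → ℝ, ‖v‖ ≤ dd → u₀ + v ∈ C := by
    intro v hv
    apply hball
    rw [Metric.mem_ball, dist_eq_norm, add_sub_cancel_left]
    calc ‖v‖ ≤ dd := hv
    _ < δ := by rw [hdddef]; linarith
  -- key geometric bound
  have key : ∀ M : Matrix (Fin (d+1)) (Fin (d+1)) ℝ, (∀ x ∈ K, M.mulVec x ∈ K) →
      ∀ y : Fin (d+1) → ℝ, c * dd * ‖M.mulVec y‖ ≤ 3 * f (M.mulVec u₀) * ‖y‖ := by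
    intro M hMK y
    have hMu₀ : M.mulVec u₀ ∈ K := hMK u₀ (subset_closure hu₀)
    have hfMu₀ : 0 ≤ f (M.mulVec u₀) := hfK0 _ hMu₀
    rcases eq_or_ne y 0 with rfl | hy0
    · rw [Matrix.mulVec_zero, norm_zero]
      simp
    · have hny : 0 < ‖y‖ := norm_pos_iff.mpr hy0
      set e : ℝ := dd / ‖y‖ with hedef
      have he : 0 < e := by positivity
      have hey : ‖e • y‖ ≤ dd := by
        rw [norm_smul, Real.norm_eq_abs, abs_of_pos he, hedef, div_mul_cancel₀ _ hny.ne']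
      have hp : u₀ + e • y ∈ C := hballC _ hey
      have hq : u₀ + e • (-y) ∈ C := hballC _ (by rwa [smul_neg, norm_neg])
      have hMp : M.mulVec (u₀ + e • y) ∈ K := hMK _ (subset_closure hp)
      have hMq : M.mulVec (u₀ + e • (-y)) ∈ K := hMK _ (subset_closure hq)
      have hexp : M.mulVec (u₀ + e • y) = M.mulVec u₀ + e • M.mulVec y := by
        rw [Matrix.mulVec_add, Matrix.mulVec_smul]
      have hexq : M.mulVec (u₀ + e • (-y)) = M.mulVec u₀ - e • M.mulVec y := by
        rw [Matrix.mulVec_add, Matrix.mulVec_smul, Matrix.mulVec_neg, smul_neg,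
          sub_eq_add_neg]
      have h1 : 0 ≤ f (M.mulVec u₀) - e * f (M.mulVec y) := by
        have h1' := hfK0 _ hMq
        rw [hexq, map_sub, map_smul, smul_eq_mul] at h1'
        linarith
      have h2 : c * ‖M.mulVec u₀ + e • M.mulVec y‖
          ≤ f (M.mulVec u₀) + e * f (M.mulVec y) := by
        have h2' := hfK _ hMp
        rw [hexp, map_add, map_smul, smul_eq_mul] at h2'
        linarith
      have h3 : c * ‖M.mulVec u₀‖ ≤ f (M.mulVec u₀) := hfK _ hMu₀
      have htri : e * ‖M.mulVec y‖ ≤ ‖M.mulVec u₀ + e • M.mulVec y‖ + ‖M.mulVec u₀‖ := by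
        have h5 : ‖(M.mulVec u₀ + e • M.mulVec y) - M.mulVec u₀‖
            ≤ ‖M.mulVec u₀ + e • M.mulVec y‖ + ‖M.mulVec u₀‖ := norm_sub_le _ _
        rw [add_sub_cancel_left, norm_smul, Real.norm_eq_abs, abs_of_pos he] at h5
        exact h5
      have h4 : c * (e * ‖M.mulVec y‖) ≤ 3 * f (M.mulVec u₀) := by
        have h6 := mul_le_mul_of_nonneg_left htri hc.le
        rw [mul_add] at h6
        linarith
      rw [hedef] at h4
      have h7 := mul_le_mul_of_nonneg_left h4 hny.le
      calc c * dd * ‖M.mulVec y‖ = ‖y‖ * (c * (dd / ‖y‖ * ‖M.mulVec y‖)) := by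
            field_simp
      _ ≤ ‖y‖ * (3 * f (M.mulVec u₀)) := h7
      _ = 3 * f (M.mulVec u₀) * ‖y‖ := by ring
  -- spectral data
  obtain ⟨μ, hμev, hμρ⟩ := hattain
  obtain ⟨z, hz⟩ := hμev.exists_hasEigenvector
  have hz0 : z ≠ 0 := hz.2
  have hzB : B.mulVec z = μ • z := by
    have := hz.apply_eq_smul
    rwa [Matrix.toLin'_apply] at this
  have hρnn : 0 ≤ ρ := hμρ ▸ (norm_nonneg μ)
  have hρ0 : 0 < ρ := by
    have hdetB : B.det = 1 := by
      have h8 := (algebraMap ℝ ℂ).map_det A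
      rw [RingHom.mapMatrix_apply] at h8
      rw [hBdef, ← h8, γ.2, map_one]
    have hμ0 : μ ≠ 0 := by
      intro hμ0
      apply hz0
      have h3 : B⁻¹.mulVec (B.mulVec z) = B⁻¹.mulVec (μ • z) := by rw [hzB]
      rw [Matrix.mulVec_mulVec, Matrix.nonsing_inv_mul B (by rw [hdetB]; exact isUnit_one),
        Matrix.one_mulVec, hμ0, zero_smul, Matrix.mulVec_zero] at h3
      exact h3
    rw [← hμρ]
    exact norm_pos_iff.mpr hμ0
  have hBn : ∀ n : ℕ, (B ^ n).mulVec z = μ ^ n • z := by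
    intro n
    induction n with
    | zero => simp [Matrix.one_mulVec]
    | succ n ih =>
      rw [pow_succ', ← Matrix.mulVec_mulVec, ih, Matrix.mulVec_smul, hzB, smul_smul,
        ← pow_succ]
  -- lower bound on f along the orbit of u₀
  have hlow : ∀ n : ℕ, c * dd * ρ ^ n ≤ 6 * f ((A ^ n).mulVec u₀) := by
    intro n
    set xr : Fin (d+1) → ℝ := fun i => (z i).re with hxrdef
    set xi : Fin (d+1) → ℝ := fun i => (z i).im with hxidef
    have hBpow : B ^ n = (A ^ n).map (algebraMap ℝ ℂ) := by
      have h9 := map_pow ((algebraMap ℝ ℂ).mapMatrix) A n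
      rw [RingHom.mapMatrix_apply, RingHom.mapMatrix_apply] at h9
      rw [hBdef, ← h9]
    have hcomp : ∀ i, ((B ^ n).mulVec z) i
        = ((((A ^ n).mulVec xr) i : ℝ) : ℂ) + ((((A ^ n).mulVec xi) i : ℝ) : ℂ) * Complex.I := by
      intro i
      rw [hBpow]
      simp only [Matrix.mulVec, dotProduct, Matrix.map_apply]
      apply Complex.ext
      · simp [Complex.re_sum, hxrdef]
      · simp [Complex.im_sum, hxidef]
    have h6 : ‖μ ^ n • z‖ = ρ ^ n * ‖z‖ := by
      rw [norm_smul, norm_pow, hμρ]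
    have hstep2 : ρ ^ n * ‖z‖ ≤ ‖(A ^ n).mulVec xr‖ + ‖(A ^ n).mulVec xi‖ := by
      rw [← h6]
      refine (pi_norm_le_iff_of_nonneg (by positivity)).mpr fun i => ?_
      have h10 : (μ ^ n • z) i = ((B ^ n).mulVec z) i := by rw [hBn n]
      rw [h10, hcomp i]
      set a : ℝ := ((A ^ n).mulVec xr) i
      set b : ℝ := ((A ^ n).mulVec xi) i
      have h11 := Complex.norm_le_abs_re_add_abs_im ((a : ℂ) + (b : ℂ) * Complex.I)
      have hre : ((a : ℂ) + (b : ℂ) * Complex.I).re = a := by simp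
      have him : ((a : ℂ) + (b : ℂ) * Complex.I).im = b := by simp
      rw [hre, him] at h11
      refine h11.trans (add_le_add ?_ ?_)
      · exact (Real.norm_eq_abs a) ▸ norm_le_pi_norm ((A ^ n).mulVec xr) i
      · exact (Real.norm_eq_abs b) ▸ norm_le_pi_norm ((A ^ n).mulVec xi) i
    have hxrz : ‖xr‖ ≤ ‖z‖ := by
      refine (pi_norm_le_iff_of_nonneg (norm_nonneg z)).mpr fun i => ?_
      calc ‖xr i‖ = |(z i).re| := by rw [Real.norm_eq_abs]
      _ ≤ ‖z i‖ := Complex.abs_re_le_norm (z i)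
      _ = ‖z i‖ := rfl
      _ ≤ ‖z‖ := norm_le_pi_norm z i
    have hxiz : ‖xi‖ ≤ ‖z‖ := by
      refine (pi_norm_le_iff_of_nonneg (norm_nonneg z)).mpr fun i => ?_
      calc ‖xi i‖ = |(z i).im| := by rw [Real.norm_eq_abs]
      _ ≤ ‖z i‖ := Complex.abs_im_le_norm (z i)
      _ = ‖z i‖ := rfl
      _ ≤ ‖z‖ := norm_le_pi_norm z i
    have hk1 := key (A ^ n) (hKpow n) xr
    have hk2 := key (A ^ n) (hKpow n) xi
    have hzpos : 0 < ‖z‖ := norm_pos_iff.mpr hz0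
    have hfn : 0 ≤ f ((A ^ n).mulVec u₀) := hfK0 _ (hKpow n u₀ (subset_closure hu₀))
    have hcd : 0 < c * dd := by positivity
    -- combine
    have h12 : c * dd * (ρ ^ n * ‖z‖) ≤ 6 * f ((A ^ n).mulVec u₀) * ‖z‖ := by
      have h13 := mul_le_mul_of_nonneg_left hstep2 hcd.le
      have h14 : 3 * f ((A ^ n).mulVec u₀) * ‖xr‖ ≤ 3 * f ((A ^ n).mulVec u₀) * ‖z‖ := by
        nlinarith
      have h15 : 3 * f ((A ^ n).mulVec u₀) * ‖xi‖ ≤ 3 * f ((A ^ n).mulVec u₀) * ‖z‖ := by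
        nlinarith
      nlinarith
    have := le_of_mul_le_mul_right (by nlinarith : (c * dd * ρ ^ n) * ‖z‖
        ≤ (6 * f ((A ^ n).mulVec u₀)) * ‖z‖) hzpos
    linarith
  -- spectrum bound
  have hspec : ∀ ν ∈ spectrum ℂ B, ‖ν‖ ≤ ρ := by
    intro ν hν
    have h1 : spectrum ℂ ((Matrix.toLinAlgEquiv' : Matrix (Fin (d+1)) (Fin (d+1)) ℂ ≃ₐ[ℂ]
        _) B) = spectrum ℂ B := AlgEquiv.spectrum_eq _ B
    rw [← h1] at hν
    have hev : Module.End.HasEigenvalue (Matrix.toLin' B) ν := by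
      have h2 : (Matrix.toLinAlgEquiv' B : (Fin (d+1) → ℂ) →ₗ[ℂ] (Fin (d+1) → ℂ))
          = Matrix.toLin' B := LinearMap.ext fun v => by
        rw [Matrix.toLinAlgEquiv'_apply, Matrix.toLin'_apply]
      rw [Module.End.hasEigenvalue_iff_mem_spectrum, ← h2]
      exact hν
    exact hmax ν hev
  -- main construction: approximate eigenvectors
  have main : ∀ t : ℝ, ρ < t → ∃ r, r ∈ K ∧ A.mulVec r = t • r - u₀ ∧
      c * dd / (6 * (t - ρ)) ≤ f r := by
    intro t ht
    have ht0 : 0 < t := hρ0.trans ht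
    set s : ℝ := (ρ + t) / 2 with hsdef
    have hs1 : ρ < s := by rw [hsdef]; linarith
    have hs2 : s < t := by rw [hsdef]; linarith
    have hs0 : 0 < s := hρ0.trans hs1
    clear_value s
    set uC : Fin (d+1) → ℂ := fun i => ((u₀ i : ℝ) : ℂ) with huCdef
    have hgrow := matrix_pow_norm_le B ρ hρnn hspec s hs1
    set g : ℕ → (Fin (d+1) → ℝ) := fun n => (t ^ (n+1))⁻¹ • (A ^ n).mulVec u₀ with hgdef
    have hgn' : ∀ n, g n = (t ^ (n+1))⁻¹ • (A ^ n).mulVec u₀ := fun n => by rw [hgdef]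
    clear_value g
    have hBpow : ∀ n : ℕ, B ^ n = (A ^ n).map (algebraMap ℝ ℂ) := by
      intro n
      have h9 := map_pow ((algebraMap ℝ ℂ).mapMatrix) A n
      rw [RingHom.mapMatrix_apply, RingHom.mapMatrix_apply] at h9
      rw [hBdef, ← h9]
    have hnormvec : ∀ v : Fin (d+1) → ℝ, ‖(fun i => ((v i : ℝ) : ℂ))‖ = ‖v‖ := by
      intro v
      rw [Pi.norm_def, Pi.norm_def]
      congr 1
      apply Finset.sup_congr rfl
      intro i _
      rw [Complex.nnnorm_real]
    have hmapvec : ∀ n : ℕ, (B ^ n).mulVec uC = fun i => ((((A ^ n).mulVec u₀) i : ℝ) : ℂ) := by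
      intro n
      funext i
      rw [hBpow n]
      simp only [Matrix.mulVec, dotProduct, Matrix.map_apply, huCdef]
      push_cast
      rfl
    have huCnorm : ‖uC‖ = ‖u₀‖ := by rw [huCdef]; exact hnormvec u₀
    clear_value uC
    have hgbound : ∀ᶠ n in Filter.atTop, ‖g n‖ ≤ (‖u₀‖ / t) * (s / t) ^ n := by
      filter_upwards [hgrow] with n hn
      have h21 : ‖(B ^ n).mulVec uC‖ ≤ ‖B ^ n‖ * ‖uC‖ := Matrix.linfty_opNorm_mulVec _ _
      rw [hmapvec n, hnormvec, huCnorm] at h21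
      have h20 : ‖(A ^ n).mulVec u₀‖ ≤ s ^ n * ‖u₀‖ := by
        refine h21.trans ?_
        exact mul_le_mul_of_nonneg_right hn (norm_nonneg _)
      have hgn : ‖g n‖ = (t ^ (n+1))⁻¹ * ‖(A ^ n).mulVec u₀‖ := by
        rw [hgn' n, norm_smul, Real.norm_eq_abs, abs_of_pos (by positivity)]
      rw [hgn]
      calc (t ^ (n+1))⁻¹ * ‖(A ^ n).mulVec u₀‖ ≤ (t ^ (n+1))⁻¹ * (s ^ n * ‖u₀‖) := by
            exact mul_le_mul_of_nonneg_left h20 (by positivity)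
      _ = (‖u₀‖ / t) * (s / t) ^ n := by
            rw [div_pow]
            field_simp
            ring
    have hgeo : Summable (fun n : ℕ => (‖u₀‖ / t) * (s / t) ^ n) :=
      (summable_geometric_of_lt_one (div_nonneg hs0.le ht0.le)
        (by rw [div_lt_one ht0]; exact hs2)).mul_left _
    have hsum : Summable g := Summable.of_norm_bounded_eventually_nat hgeo hgbound
    set r : Fin (d+1) → ℝ := ∑' n, g n with hrdef
    have hr : HasSum g r := hrdef ▸ hsum.hasSum
    clear_value r
    have hgC : ∀ n, g n ∈ C := by
      intro n
      rw [hgn' n]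
      exact hcone _ (by positivity) _ (hCpow n u₀ hu₀)
    have hpartial : ∀ N : ℕ, ∑ n ∈ Finset.range (N+1), g n ∈ C := by
      intro N
      induction N with
      | zero => simpa using hgC 0
      | succ N ih =>
        rw [Finset.sum_range_succ]
        exact hCadd _ ih _ (hgC (N+1))
    have hrK : r ∈ K := by
      have htend : Filter.Tendsto (fun N => ∑ n ∈ Finset.range (N+1), g n)
          Filter.atTop (nhds r) := hr.tendsto_sum_nat.comp (Filter.tendsto_add_atTop_nat 1)
      exact mem_closure_of_tendsto htend (Filter.Eventually.of_forall hpartial)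
    have hAg : ∀ n, A.mulVec (g n) = t • g (n+1) := by
      intro n
      rw [hgn' n, hgn' (n+1), Matrix.mulVec_smul, Matrix.mulVec_mulVec, ← pow_succ',
        smul_smul]
      congr 1
      have h26 : t * (t ^ (n+1+1))⁻¹ = (t ^ (n+1))⁻¹ := by
        field_simp
        ring
      rw [h26]
    obtain ⟨TA, hTAapp⟩ : ∃ TA : (Fin (d+1) → ℝ) →L[ℝ] (Fin (d+1) → ℝ),
        ∀ v, TA v = A.mulVec v :=
      ⟨LinearMap.toContinuousLinearMap (Matrix.mulVecLin A), fun v => by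
        rw [LinearMap.coe_toContinuousLinearMap']
        exact Matrix.mulVecLin_apply A v⟩
    have hshift : HasSum (fun n => g (n+1)) (r - g 0) := by
      refine (hasSum_nat_add_iff 1).mpr ?_
      simpa using hr
    have hsum2 : HasSum (fun n => A.mulVec (g n)) (t • (r - g 0)) := by
      have h27 := hshift.const_smul t
      have h28 : (fun n => t • g (n+1)) = fun n => A.mulVec (g n) := by
        funext n
        rw [hAg n]
      rwa [h28] at h27
    have hsum3 : HasSum (fun n => A.mulVec (g n)) (A.mulVec r) := by
      have h29 := hr.mapL TA
      simpa only [hTAapp] using h29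
    have hid : A.mulVec r = t • r - u₀ := by
      have h22 := hsum3.unique hsum2
      rw [h22, smul_sub]
      congr 1
      rw [hgn' 0, smul_smul, pow_zero, Matrix.one_mulVec]
      have : t * (t ^ (0+1))⁻¹ = 1 := by
        field_simp
        ring
      rw [this, one_smul]
    have hfsum : HasSum (fun n => f (g n)) (f r) := hr.mapL f
    have hterm : ∀ n, (c * dd / (6 * t)) * (ρ / t) ^ n ≤ f (g n) := by
      intro n
      have h23 := hlow n
      have h24 : f (g n) = (t ^ (n+1))⁻¹ * f ((A ^ n).mulVec u₀) := by
        rw [hgn' n, map_smul, smul_eq_mul]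
      rw [h24]
      have h30 : (c * dd / (6 * t)) * (ρ / t) ^ n = (c * dd * ρ ^ n) / (6 * t ^ (n+1)) := by
        rw [div_pow]
        field_simp
        ring
      rw [h30, div_le_iff₀ (by positivity)]
      calc c * dd * ρ ^ n ≤ 6 * f ((A ^ n).mulVec u₀) := h23
      _ = (t ^ (n+1))⁻¹ * f ((A ^ n).mulVec u₀) * (6 * t ^ (n+1)) := by
            field_simp
    have hgeo2 : Summable (fun n : ℕ => (c * dd / (6 * t)) * (ρ / t) ^ n) :=
      (summable_geometric_of_lt_one (by positivity) (by rw [div_lt_one ht0]; exact ht)).mul_left _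
    have h25 := hgeo2.tsum_le_tsum hterm hfsum.summable
    rw [hfsum.tsum_eq, tsum_mul_left,
      tsum_geometric_of_lt_one (by positivity) (by rw [div_lt_one ht0]; exact ht)] at h25
    refine ⟨r, hrK, hid, ?_⟩
    have h31 : c * dd / (6 * t) * (1 - ρ / t)⁻¹ = c * dd / (6 * (t - ρ)) := by
      have htρ : t - ρ ≠ 0 := by linarith
      have h32 : 1 - ρ / t = (t - ρ) / t := by
        field_simp
      rw [h32]
      rw [inv_div]
      field_simp
    linarith [h25, h31]
  -- conclude by a limiting argument
  set tk : ℕ → ℝ := fun k => ρ + ((k:ℝ)+1)⁻¹ with htkdef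
  have htkn : ∀ k : ℕ, tk k = ρ + ((k:ℝ)+1)⁻¹ := fun k => by rw [htkdef]
  clear_value tk
  have htk : ∀ k : ℕ, ρ < tk k := by
    intro k
    rw [htkn k]
    have : 0 < ((k:ℝ)+1)⁻¹ := by positivity
    linarith
  choose r hrK hrEq hrf using fun k => main (tk k) (htk k)
  have hfr : ∀ k : ℕ, c * dd * ((k:ℝ)+1) / 6 ≤ f (r k) := by
    intro k
    have h33 := hrf k
    rw [htkn k] at h33
    have h34 : ρ + ((k:ℝ)+1)⁻¹ - ρ = ((k:ℝ)+1)⁻¹ := by ring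
    rw [h34] at h33
    have h35 : c * dd / (6 * ((k:ℝ)+1)⁻¹) = c * dd * ((k:ℝ)+1) / 6 := by
      rw [div_eq_div_iff (by positivity) (by norm_num)]
      field_simp
    rw [h35] at h33
    exact h33
  have hfrpos : ∀ k : ℕ, 0 < f (r k) := fun k => lt_of_lt_of_le (by positivity) (hfr k)
  have hrne : ∀ k : ℕ, 0 < ‖r k‖ := by
    intro k
    rcases eq_or_lt_of_le (norm_nonneg (r k)) with h | h
    · exfalso
      have h36 : r k = 0 := norm_eq_zero.mp h.symm
      have := hfrpos k
      rw [h36, map_zero] at this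
      exact lt_irrefl _ this
    · exact h
  have hfnorm : ∀ k : ℕ, f (r k) ≤ ‖f‖ * ‖r k‖ := by
    intro k
    calc f (r k) ≤ |f (r k)| := le_abs_self _
    _ = ‖f (r k)‖ := (Real.norm_eq_abs _).symm
    _ ≤ ‖f‖ * ‖r k‖ := f.le_opNorm _
  have hfpos : 0 < ‖f‖ := by
    rcases eq_or_lt_of_le (norm_nonneg f) with h | h
    · exfalso
      have := (hfr 0).trans (hfnorm 0)
      rw [← h, zero_mul] at this
      have hpos : (0:ℝ) < c * dd * ((0:ℕ):ℝ) / 6 + c * dd / 6 := by positivity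
      push_cast at this
      nlinarith
    · exact h
  have hrtend : Filter.Tendsto (fun k => ‖r k‖) Filter.atTop Filter.atTop := by
    have hgrowL : Filter.Tendsto (fun k : ℕ => (c * dd / (6 * ‖f‖)) * ((k:ℝ)+1))
        Filter.atTop Filter.atTop := by
      apply Filter.Tendsto.const_mul_atTop (by positivity)
      exact Filter.tendsto_atTop_add_const_right _ 1 tendsto_natCast_atTop_atTop
    apply Filter.tendsto_atTop_mono _ hgrowL
    intro k
    have h37 := (hfr k).trans (hfnorm k)
    rw [div_mul_eq_mul_div, div_le_iff₀ (by positivity)]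
    calc c * dd * ((k:ℝ)+1) ≤ ‖f‖ * ‖r k‖ * 6 := by linarith
    _ = ‖r k‖ * (6 * ‖f‖) := by ring
  have hinv : Filter.Tendsto (fun k => ‖r k‖⁻¹) Filter.atTop (nhds 0) :=
    hrtend.inv_tendsto_atTop
  set w : ℕ → (Fin (d+1) → ℝ) := fun k => ‖r k‖⁻¹ • r k with hwdef
  have hwn : ∀ k : ℕ, w k = ‖r k‖⁻¹ • r k := fun k => by rw [hwdef]
  clear_value w
  have hwK : ∀ k : ℕ, w k ∈ K ∩ Metric.sphere 0 1 := by
    intro k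
    constructor
    · rw [hwn k]
      exact hKsmul _ (inv_pos.mpr (hrne k)) _ (hrK k)
    · rw [mem_sphere_zero_iff_norm, hwn k, norm_smul, Real.norm_eq_abs,
        abs_of_pos (inv_pos.mpr (hrne k)), inv_mul_cancel₀ (hrne k).ne']
  have hcomp2 : IsCompact (K ∩ Metric.sphere 0 1) := (isCompact_sphere 0 1).inter_left hKc
  obtain ⟨wlim, hwlim, φ, hφ, hφtend⟩ := hcomp2.tendsto_subseq hwK
  have hwid : ∀ k : ℕ, A.mulVec (w k) = tk k • w k - ‖r k‖⁻¹ • u₀ := by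
    intro k
    rw [hwn k, Matrix.mulVec_smul, hrEq k, smul_sub]
    congr 1
    rw [smul_smul, smul_smul, mul_comm]
  have hcont : Continuous fun y : Fin (d+1) → ℝ => A.mulVec y :=
    (Matrix.mulVecLin A).continuous_of_finiteDimensional
  have h35' : Filter.Tendsto (fun k => A.mulVec (w (φ k))) Filter.atTop
      (nhds (A.mulVec wlim)) := (hcont.tendsto wlim).comp hφtend
  have htktend : Filter.Tendsto (fun k => tk (φ k)) Filter.atTop (nhds ρ) := by
    have h36' : Filter.Tendsto tk Filter.atTop (nhds ρ) := by
      have h37' : Filter.Tendsto (fun k : ℕ => ρ + ((k:ℝ)+1)⁻¹) Filter.atTop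
          (nhds (ρ + 0)) := by
        apply Filter.Tendsto.const_add
        simpa [one_div] using tendsto_one_div_add_atTop_nhds_zero_nat (𝕜 := ℝ)
      rw [add_zero] at h37'
      have h38' : tk = fun k : ℕ => ρ + ((k:ℝ)+1)⁻¹ := funext htkn
      rw [h38']
      exact h37'
    exact h36'.comp hφ.tendsto_atTop
  have hinv2 : Filter.Tendsto (fun k => ‖r (φ k)‖⁻¹) Filter.atTop (nhds 0) :=
    hinv.comp hφ.tendsto_atTop
  have h38 : Filter.Tendsto (fun k => tk (φ k) • w (φ k) - ‖r (φ k)‖⁻¹ • u₀)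
      Filter.atTop (nhds (ρ • wlim - (0:ℝ) • u₀)) :=
    (htktend.smul hφtend).sub (hinv2.smul_const u₀)
  have h39 : A.mulVec wlim = ρ • wlim := by
    have heqfun : (fun k => A.mulVec (w (φ k)))
        = fun k => tk (φ k) • w (φ k) - ‖r (φ k)‖⁻¹ • u₀ := funext fun k => hwid (φ k)
    rw [heqfun] at h35'
    have h40 := tendsto_nhds_unique h35' h38
    rw [h40, zero_smul, sub_zero]
  have hw0 : wlim ≠ 0 := by
    intro h
    have h41 := hwlim.2
    rw [h, mem_sphere_zero_iff_norm, norm_zero] at h41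
    exact one_ne_zero h41.symm
  exact Module.End.hasEigenvalue_of_hasEigenvector
    ⟨Module.End.mem_eigenspace_iff.mpr (by rw [Matrix.toLin'_apply]; exact h39), hw0⟩
end

section
/- If γ ∈ SL(d+1, ℝ) preserves a properly convex open subset Ω of ℝP^d and all eigenvalues of γ have modulus 1 and γ is diagonalizable over ℂ (i.e., γ is S¹-semi-simple), then γ fixes a point of Ω. -/
open Module

/-- zpow of a unit on an eigenvector. -/
lemma zpow_apply_eigen {R V : Type*} [Field R] [AddCommGroup V] [Module R V]
    (u : (Module.End R V)ˣ) {μ : R} (hμ : μ ≠ 0) {x : V}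
    (hx : (u : Module.End R V) x = μ • x) :
    ∀ n : ℤ, ((u ^ n : (Module.End R V)ˣ) : Module.End R V) x = μ ^ n • x := by
  have hinv : ((u⁻¹ : (Module.End R V)ˣ) : Module.End R V) x = μ⁻¹ • x := by
    have h1 : ((u⁻¹ : (Module.End R V)ˣ) : Module.End R V)
        (((u : Module.End R V)) (μ⁻¹ • x)) = μ⁻¹ • x := by
      rw [← Module.End.mul_apply, Units.inv_mul, Module.End.one_apply]
    rw [map_smul, hx, smul_smul, inv_mul_cancel₀ hμ, one_smul] at h1
    exact h1
  intro n
  induction n using Int.induction_on with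
  | zero => simp
  | succ k ih =>
      have : u ^ ((k : ℤ) + 1) = u ^ (k : ℤ) * u := zpow_add_one u k
      rw [this, Units.val_mul, Module.End.mul_apply, hx, map_smul, ih, smul_smul,
        zpow_add_one₀ hμ, mul_comm]
  | pred k ih =>
      have : u ^ (-(k : ℤ) - 1) = u ^ (-(k : ℤ)) * u⁻¹ := zpow_sub_one u (-k)
      rw [this, Units.val_mul, Module.End.mul_apply, hinv, map_smul, ih, smul_smul,
        zpow_sub_one₀ hμ, mul_comm]

lemma exists_pow_bound {N : ℕ} (u : (Module.End ℂ (Fin N → ℂ))ˣ)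
    (hdiag : (⨆ μ : ℂ, Module.End.eigenspace (u : Module.End ℂ (Fin N → ℂ)) μ) = ⊤)
    (hmod : ∀ μ : ℂ, Module.End.HasEigenvalue (u : Module.End ℂ (Fin N → ℂ)) μ →
      ‖μ‖ = 1) :
    ∃ M : ℝ, 1 ≤ M ∧ ∀ n : ℤ, ∀ x : Fin N → ℂ,
      ‖((u ^ n : (Module.End ℂ (Fin N → ℂ))ˣ) : Module.End ℂ (Fin N → ℂ)) x‖ ≤ M * ‖x‖ := by
  have key : ∀ x : Fin N → ℂ, ∃ B : ℝ, ∀ n : ℤ,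
      ‖((u ^ n : (Module.End ℂ (Fin N → ℂ))ˣ) : Module.End ℂ (Fin N → ℂ)) x‖ ≤ B := by
    intro x
    have hx : x ∈ ⨆ μ : ℂ, Module.End.eigenspace (u : Module.End ℂ (Fin N → ℂ)) μ := by
      rw [hdiag]; trivial
    refine Submodule.iSup_induction (motive := fun y => ∃ B : ℝ, ∀ n : ℤ,
        ‖((u ^ n : (Module.End ℂ (Fin N → ℂ))ˣ) : Module.End ℂ (Fin N → ℂ)) y‖ ≤ B)
      _ hx ?_ ?_ ?_
    · intro μ y hy
      by_cases hy0 : y = 0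
      · exact ⟨0, fun n => by simp [hy0]⟩
      · have heig : (u : Module.End ℂ (Fin N → ℂ)) y = μ • y :=
          Module.End.mem_eigenspace_iff.mp hy
        have hev : Module.End.HasEigenvalue (u : Module.End ℂ (Fin N → ℂ)) μ :=
          Module.End.hasEigenvalue_of_hasEigenvector ⟨hy, hy0⟩
        have habs : ‖μ‖ = 1 := hmod μ hev
        have hμ0 : μ ≠ 0 := by
          intro h; rw [h] at habs; simp at habs
        refine ⟨‖y‖, fun n => ?_⟩
        rw [zpow_apply_eigen u hμ0 heig n, norm_smul, norm_zpow]
        rw [habs, one_zpow, one_mul]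
    · exact ⟨0, fun n => by simp⟩
    · rintro y z ⟨B1, hB1⟩ ⟨B2, hB2⟩
      exact ⟨B1 + B2, fun n => by
        rw [map_add]; exact (norm_add_le _ _).trans (add_le_add (hB1 n) (hB2 n))⟩
  choose B hB using fun i : Fin N => key (Pi.single i 1)
  refine ⟨max (∑ i, B i) 1, le_max_right _ _, fun n x => ?_⟩
  have hxdec : x = ∑ i, x i • (Pi.single i 1 : Fin N → ℂ) := by
    funext j
    simp [Finset.sum_apply, Pi.single_apply, Finset.sum_ite_eq', mul_comm]
  calc ‖((u ^ n : (Module.End ℂ (Fin N → ℂ))ˣ) : Module.End ℂ (Fin N → ℂ)) x‖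
      = ‖∑ i, x i • ((u ^ n : (Module.End ℂ (Fin N → ℂ))ˣ) : Module.End ℂ (Fin N → ℂ))
          (Pi.single i 1)‖ := by
        conv_lhs => rw [hxdec]
        rw [map_sum]
        simp_rw [map_smul]
    _ ≤ ∑ i, ‖x i • ((u ^ n : (Module.End ℂ (Fin N → ℂ))ˣ) : Module.End ℂ (Fin N → ℂ))
          (Pi.single i 1)‖ := norm_sum_le _ _
    _ ≤ ∑ i, ‖x‖ * B i := by
        refine Finset.sum_le_sum fun i _ => ?_
        rw [norm_smul]
        exact mul_le_mul (norm_le_pi_norm x i) (hB i _) (norm_nonneg _) (norm_nonneg _)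
    _ = (∑ i, B i) * ‖x‖ := by rw [← Finset.mul_sum, mul_comm]
    _ ≤ max (∑ i, B i) 1 * ‖x‖ := by
        exact mul_le_mul_of_nonneg_right (le_max_left _ _) (norm_nonneg _)

noncomputable def fR (N : ℕ) : Matrix (Fin N) (Fin N) ℝ →* Module.End ℝ (Fin N → ℝ) :=
  (Matrix.toLinAlgEquiv'.toAlgHom.toRingHom.toMonoidHom)

noncomputable def fC (N : ℕ) : Matrix (Fin N) (Fin N) ℝ →* Module.End ℂ (Fin N → ℂ) :=
  ((Matrix.toLinAlgEquiv'.toAlgHom.toRingHom).comp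
    ((algebraMap ℝ ℂ).mapMatrix)).toMonoidHom

lemma fR_apply {N : ℕ} (M : Matrix (Fin N) (Fin N) ℝ) : fR N M = Matrix.toLin' M := by
  ext v i
  rfl

lemma fC_apply {N : ℕ} (M : Matrix (Fin N) (Fin N) ℝ) :
    fC N M = Matrix.toLin' (M.map (algebraMap ℝ ℂ)) := by
  ext v i
  rfl

lemma norm_ofReal_comp {N : ℕ} (x : Fin N → ℝ) : ‖(fun i => (x i : ℂ))‖ = ‖x‖ := by
  simp [Pi.norm_def]

lemma complexify_zpow {N : ℕ} (m : (Matrix (Fin N) (Fin N) ℝ)ˣ) (n : ℤ) (x : Fin N → ℝ) :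
    (((Units.map (fC N) m ^ n : (Module.End ℂ (Fin N → ℂ))ˣ) : Module.End ℂ (Fin N → ℂ))
      (fun i => (x i : ℂ)))
    = fun i => ((((Units.map (fR N) m ^ n : (Module.End ℝ (Fin N → ℝ))ˣ) :
        Module.End ℝ (Fin N → ℝ)) x i : ℝ) : ℂ) := by
  rw [← map_zpow, ← map_zpow]
  funext i
  show (Matrix.toLin' (((m ^ n : (Matrix (Fin N) (Fin N) ℝ)ˣ) :
      Matrix (Fin N) (Fin N) ℝ).map (algebraMap ℝ ℂ)) (fun i => (x i : ℂ))) i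
    = ((Matrix.toLin' ((m ^ n : (Matrix (Fin N) (Fin N) ℝ)ˣ) : Matrix (Fin N) (Fin N) ℝ) x i : ℝ) : ℂ)
  rw [Matrix.toLin'_apply, Matrix.toLin'_apply]
  exact (RingHom.map_mulVec (algebraMap ℝ ℂ) _ x i).symm

lemma real_zpow_bound {N : ℕ} (m : (Matrix (Fin N) (Fin N) ℝ)ˣ)
    (hdiag : (⨆ μ : ℂ, Module.End.eigenspace
      (Matrix.toLin' ((m : Matrix (Fin N) (Fin N) ℝ).map (algebraMap ℝ ℂ))) μ) = ⊤)
    (hmod : ∀ μ : ℂ, Module.End.HasEigenvalue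
      (Matrix.toLin' ((m : Matrix (Fin N) (Fin N) ℝ).map (algebraMap ℝ ℂ))) μ →
      ‖μ‖ = 1) :
    ∃ M : ℝ, 1 ≤ M ∧ ∀ n : ℤ, ∀ x : Fin N → ℝ,
      ‖((Units.map (fR N) m ^ n : (Module.End ℝ (Fin N → ℝ))ˣ) :
        Module.End ℝ (Fin N → ℝ)) x‖ ≤ M * ‖x‖ := by
  have hval : ((Units.map (fC N) m : (Module.End ℂ (Fin N → ℂ))ˣ) :
      Module.End ℂ (Fin N → ℂ)) = Matrix.toLin' ((m : Matrix (Fin N) (Fin N) ℝ).map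
        (algebraMap ℝ ℂ)) := fC_apply _
  obtain ⟨M, hM1, hM⟩ := exists_pow_bound (Units.map (fC N) m) (by rw [hval]; exact hdiag)
    (by rw [hval]; exact hmod)
  refine ⟨M, hM1, fun n x => ?_⟩
  have := hM n (fun i => (x i : ℂ))
  rw [complexify_zpow, norm_ofReal_comp, norm_ofReal_comp] at this
  exact this


/-- A sharp open convex cone in a real topological vector space: open, convex, stable under
positive scalar multiplication, and whose closure contains no line through the origin. -/
def IsSharpCone {V : Type*} [AddCommGroup V] [Module ℝ V] [TopologicalSpace V]
    (C : Set V) : Prop :=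
  IsOpen C ∧ Convex ℝ C ∧ (∀ t : ℝ, 0 < t → ∀ x ∈ C, t • x ∈ C) ∧
    ∀ x : V, x ≠ 0 → x ∈ closure C → -x ∉ closure C

/-- The projectivization of a cone `C`: the set of projective points represented by a nonzero
vector of `C`. -/
def projCone {V : Type*} [AddCommGroup V] [Module ℝ V] (C : Set V) :
    Set (Projectivization ℝ V) :=
  {p | ∃ v, ∃ hv : v ≠ 0, v ∈ C ∧ Projectivization.mk ℝ v hv = p}

/-- A properly convex open subset of the real projective space `P(V)`: the projectivization of
a nonempty sharp open convex cone of `V`. -/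
def IsProperlyConvexOpen {V : Type*} [AddCommGroup V] [Module ℝ V] [TopologicalSpace V]
    (Ω : Set (Projectivization ℝ V)) : Prop :=
  ∃ C : Set V, IsSharpCone C ∧ C.Nonempty ∧ Ω = projCone C

/-- If `γ ∈ SL(d+1,ℝ)` preserves a properly convex open subset `Ω ⊆ ℝP^d` and `γ` is
`S¹`-semi-simple (diagonalizable over `ℂ` with all eigenvalues of modulus `1`), then `γ`
fixes a point of `Ω`. -/
theorem s1_semisimple_fixes_point {d : ℕ}
    (γ : Matrix.SpecialLinearGroup (Fin (d + 1)) ℝ)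
    (hinj : Function.Injective (Matrix.toLin' (γ : Matrix (Fin (d + 1)) (Fin (d + 1)) ℝ)))
    (Ω : Set (Projectivization ℝ (Fin (d + 1) → ℝ)))
    (hΩ : IsProperlyConvexOpen Ω)
    (hpres : Projectivization.map
      (Matrix.toLin' (γ : Matrix (Fin (d + 1)) (Fin (d + 1)) ℝ)) hinj '' Ω = Ω)
    (hdiag : (⨆ μ : ℂ, Module.End.eigenspace
      (Matrix.toLin' ((γ : Matrix (Fin (d + 1)) (Fin (d + 1)) ℝ).map (algebraMap ℝ ℂ))) μ) = ⊤)
    (hmod : ∀ μ : ℂ, Module.End.HasEigenvalue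
      (Matrix.toLin' ((γ : Matrix (Fin (d + 1)) (Fin (d + 1)) ℝ).map (algebraMap ℝ ℂ))) μ →
      ‖μ‖ = 1) :
    ∃ p ∈ Ω, Projectivization.map
      (Matrix.toLin' (γ : Matrix (Fin (d + 1)) (Fin (d + 1)) ℝ)) hinj p = p := by
  classical
  obtain ⟨C, ⟨hCo, hCc, hCsm, hCsharp⟩, ⟨v, hvC⟩, hΩC⟩ := hΩ
  set T : Module.End ℝ (Fin (d + 1) → ℝ) := Matrix.toLin' (γ : Matrix (Fin (d + 1)) (Fin (d + 1)) ℝ) with hTdef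
  -- the unit corresponding to γ
  set m : (Matrix (Fin (d + 1)) (Fin (d + 1)) ℝ)ˣ := Matrix.SpecialLinearGroup.toGL γ with hmdef
  set g : (Module.End ℝ (Fin (d + 1) → ℝ))ˣ := Units.map (fR (d + 1)) m with hgdef
  have hgval : (g : Module.End ℝ (Fin (d + 1) → ℝ)) = T := fR_apply _
  obtain ⟨M, hM1, hM⟩ := real_zpow_bound m hdiag hmod
  have hM0 : (0 : ℝ) < M := lt_of_lt_of_le one_pos hM1
  -- 0 is not in C
  have h0 : (0 : Fin (d + 1) → ℝ) ∉ C := by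
    intro h0
    obtain ⟨r, hr, hball⟩ := Metric.isOpen_iff.mp hCo 0 h0
    set x : Fin (d + 1) → ℝ := (r / 2) • (Pi.single (0 : Fin (d + 1)) (1 : ℝ) : Fin (d + 1) → ℝ) with hxdef
    have hsingle : ‖(Pi.single (0 : Fin (d + 1)) (1 : ℝ) : Fin (d + 1) → ℝ)‖ ≤ 1 := by
      refine (pi_norm_le_iff_of_nonneg zero_le_one).mpr fun i => ?_
      rcases eq_or_ne i 0 with h | h <;> simp [h, Pi.single_apply]
    have hxnorm : ‖x‖ < r := by
      rw [hxdef, norm_smul]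
      calc ‖(r/2 : ℝ)‖ * ‖(Pi.single (0 : Fin (d+1)) (1:ℝ) : Fin (d + 1) → ℝ)‖
          ≤ ‖(r/2 : ℝ)‖ * 1 := by
            exact mul_le_mul_of_nonneg_left hsingle (norm_nonneg _)
        _ = r / 2 := by rw [mul_one, Real.norm_eq_abs, abs_of_pos (by linarith)]
        _ < r := by linarith
    have hx0 : x ≠ 0 := by
      intro h
      have h1 : x 0 = 0 := congrFun h 0
      rw [hxdef] at h1
      simp [Pi.smul_apply, Pi.single_eq_same] at h1
      linarith
    have hxC : x ∈ C := hball (by simpa [Metric.mem_ball, dist_zero_right] using hxnorm)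
    have hxC' : -x ∈ C := hball (by simpa [Metric.mem_ball, dist_zero_right] using hxnorm)
    exact hCsharp x hx0 (subset_closure hxC) (subset_closure hxC')
  have hne0 : ∀ x ∈ C, x ≠ (0 : Fin (d + 1) → ℝ) := fun x hx h => h0 (h ▸ hx)
  -- T maps C into C ∪ -C
  have hTc : Continuous T := T.continuous_of_finiteDimensional
  have himg : ∀ x ∈ C, T x ∈ C ∪ {y | -y ∈ C} := by
    intro x hx
    have hx0 : x ≠ 0 := hne0 x hx
    have hmem : Projectivization.mk ℝ x hx0 ∈ Ω := by
      rw [hΩC]; exact ⟨x, hx0, hx, rfl⟩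
    have hmem2 : Projectivization.map T hinj (Projectivization.mk ℝ x hx0) ∈ Ω := by
      rw [← hpres]; exact ⟨_, hmem, rfl⟩
    rw [hΩC] at hmem2
    obtain ⟨u2, hu2ne, hu2C, hu2eq⟩ := hmem2
    rw [Projectivization.map_mk, Projectivization.mk_eq_mk_iff] at hu2eq
    obtain ⟨a, ha⟩ := hu2eq
    have ha' : (a : ℝ) • T x = u2 := ha
    have hane : (a : ℝ) ≠ 0 := a.ne_zero
    have hTx : T x = (a : ℝ)⁻¹ • u2 := by
      rw [← ha', inv_smul_smul₀ hane]
    rcases lt_or_gt_of_ne hane with hlt | hgt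
    · right
      have hposinv : (0 : ℝ) < -(a : ℝ)⁻¹ := by
        have : (a : ℝ)⁻¹ < 0 := inv_lt_zero.mpr hlt
        linarith
      have : -(T x) = (-(a : ℝ)⁻¹) • u2 := by rw [hTx, neg_smul]
      rw [Set.mem_setOf_eq, this]
      exact hCsm _ hposinv u2 hu2C
    · left
      have hposinv : (0 : ℝ) < (a : ℝ)⁻¹ := inv_pos.mpr hgt
      rw [hTx]
      exact hCsm _ hposinv u2 hu2C
  -- disjoint open pieces
  have hNo : IsOpen {y : Fin (d + 1) → ℝ | -y ∈ C} := hCo.preimage continuous_neg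
  have hdisj : Disjoint C {y : Fin (d + 1) → ℝ | -y ∈ C} := by
    rw [Set.disjoint_left]
    intro x hxC hxN
    exact hCsharp x (hne0 x hxC) (subset_closure hxC) (subset_closure hxN)
  -- choose sign
  obtain ⟨ε, hε1, hεS⟩ : ∃ ε : ℝ, (ε = 1 ∨ ε = -1) ∧ ∀ x ∈ C, ε • T x ∈ C := by
    have hsub : T '' C ⊆ C ∪ {y : Fin (d + 1) → ℝ | -y ∈ C} := by
      rintro y ⟨x, hx, rfl⟩
      exact himg x hx
    by_cases hcase : ((T '' C) ∩ C).Nonempty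
    · refine ⟨1, Or.inl rfl, fun x hx => ?_⟩
      rw [one_smul]
      exact IsPreconnected.subset_left_of_subset_union hCo hNo hdisj hsub hcase
        ((hCc.isPreconnected).image _ (hTc.continuousOn)) ⟨x, hx, rfl⟩
    · refine ⟨-1, Or.inr rfl, fun x hx => ?_⟩
      have hTx : T x ∈ {y : Fin (d + 1) → ℝ | -y ∈ C} := by
        rcases hsub ⟨x, hx, rfl⟩ with h | h
        · exact absurd ⟨T x, ⟨x, hx, rfl⟩, h⟩ hcase
        · exact h
      simpa [neg_smul, one_smul] using hTx
  have habs : |ε| = 1 := by rcases hε1 with h | h <;> simp [h]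
  have hε2 : ε * ε = 1 := by rcases hε1 with h | h <;> simp [h]
  -- step identity
  have hstep : ∀ (x : Fin (d + 1) → ℝ) (k : ℕ), ε ^ (k + 1) • ((g ^ (((k + 1 : ℕ)) : ℤ) : (Module.End ℝ (Fin (d + 1) → ℝ))ˣ) :
      Module.End ℝ (Fin (d + 1) → ℝ)) x = ε • T (ε ^ k • ((g ^ (k : ℤ) : (Module.End ℝ (Fin (d + 1) → ℝ))ˣ) :
      Module.End ℝ (Fin (d + 1) → ℝ)) x) := by
    intro x k
    have hzp : g ^ (((k + 1 : ℕ)) : ℤ) = g * g ^ (k : ℤ) := by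
      rw [show (((k + 1 : ℕ)) : ℤ) = 1 + (k : ℤ) by push_cast; ring, zpow_add, zpow_one]
    rw [hzp, Units.val_mul, Module.End.mul_apply, map_smul, ← hgval, smul_smul]
    congr 1
    ring
  -- iteration stays in C
  have hiter : ∀ x ∈ C, ∀ k : ℕ, ε ^ k • ((g ^ (k : ℤ) : (Module.End ℝ (Fin (d + 1) → ℝ))ˣ) :
      Module.End ℝ (Fin (d + 1) → ℝ)) x ∈ C := by
    intro x hx k
    induction k with
    | zero => simpa using hx
    | succ k ih =>
        rw [hstep x k]
        exact hεS _ ih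
  -- norms of scaled powers
  have hnormpow : ∀ (k : ℕ) (x : Fin (d + 1) → ℝ), ‖ε ^ k • ((g ^ (k : ℤ) : (Module.End ℝ (Fin (d + 1) → ℝ))ˣ) :
      Module.End ℝ (Fin (d + 1) → ℝ)) x‖ ≤ M * ‖x‖ := by
    intro k x
    rw [norm_smul, Real.norm_eq_abs, abs_pow, habs, one_pow, one_mul]
    exact hM _ x
  have hnormzpow : ∀ (k : ℕ) (x : Fin (d + 1) → ℝ), ‖ε ^ k • ((g ^ (-(k : ℤ)) : (Module.End ℝ (Fin (d + 1) → ℝ))ˣ) :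
      Module.End ℝ (Fin (d + 1) → ℝ)) x‖ ≤ M * ‖x‖ := by
    intro k x
    rw [norm_smul, Real.norm_eq_abs, abs_pow, habs, one_pow, one_mul]
    exact hM _ x
  -- the orbit sequence and averages
  set w : ℕ → (Fin (d + 1) → ℝ) := fun k => ε ^ k • ((g ^ (k : ℤ) : (Module.End ℝ (Fin (d + 1) → ℝ))ˣ) : Module.End ℝ (Fin (d + 1) → ℝ)) v
    with hwdef
  have hwC : ∀ k, w k ∈ C := fun k => hiter v hvC k
  have hwnorm : ∀ k, ‖w k‖ ≤ M * ‖v‖ := fun k => hnormpow k v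
  set A : ℕ → (Fin (d + 1) → ℝ) := fun n => (n : ℝ)⁻¹ • ∑ k ∈ Finset.range n, w k with hAdef
  have hAnorm : ∀ n, ‖A n‖ ≤ M * ‖v‖ := by
    intro n
    rcases Nat.eq_zero_or_pos n with h | h
    · simp [hAdef, h]
      positivity
    · rw [hAdef]
      simp only
      rw [norm_smul, Real.norm_eq_abs, abs_inv, Nat.abs_cast]
      calc ((n : ℝ))⁻¹ * ‖∑ k ∈ Finset.range n, w k‖
          ≤ ((n : ℝ))⁻¹ * (n * (M * ‖v‖)) := by
            refine mul_le_mul_of_nonneg_left ?_ (by positivity)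
            calc ‖∑ k ∈ Finset.range n, w k‖ ≤ ∑ k ∈ Finset.range n, ‖w k‖ :=
                norm_sum_le _ _
              _ ≤ ∑ _k ∈ Finset.range n, (M * ‖v‖) :=
                Finset.sum_le_sum fun k _ => hwnorm k
              _ = n * (M * ‖v‖) := by
                rw [Finset.sum_const, Finset.card_range, nsmul_eq_mul]
        _ = M * ‖v‖ := by
            field_simp
  -- convergent subsequence
  obtain ⟨wlim, -, φ, hφ, hlim⟩ := tendsto_subseq_of_bounded
    (Metric.isBounded_closedBall (x := (0 : Fin (d + 1) → ℝ)) (r := M * ‖v‖))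
    (fun n => by simpa [Metric.mem_closedBall, dist_zero_right] using hAnorm n)
  -- almost-invariance of averages
  have hw_succ : ∀ k, w (k + 1) = ε • T (w k) := by
    intro k
    exact hstep v k
  have hA_eq : ∀ n : ℕ, ε • T (A n) = A n + (n : ℝ)⁻¹ • (w n - w 0) := by
    intro n
    have h1 : ε • T (A n) = (n : ℝ)⁻¹ • ∑ k ∈ Finset.range n, w (k + 1) := by
      rw [hAdef]
      simp only
      rw [map_smul, smul_comm, map_sum, Finset.smul_sum]
      congr 1
      exact Finset.sum_congr rfl fun k _ => (hw_succ k).symm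
    have h2 : ∑ k ∈ Finset.range n, w (k + 1)
        = (∑ k ∈ Finset.range n, w k) + w n - w 0 := by
      have := Finset.sum_range_succ' w n
      rw [Finset.sum_range_succ] at this
      -- this : ∑_{k<n} w k + w n = ∑_{k<n} w (k+1) + w 0
      rw [eq_sub_iff_add_eq]
      linear_combination (norm := abel) this.symm
    rw [h1, h2]
    simp only [hAdef]
    module
  -- the limit is fixed by ε • T
  have hScont : Continuous fun y : Fin (d + 1) → ℝ => ε • T y := (hTc.const_smul ε)
  have hφtop : Filter.Tendsto (fun j => (φ j : ℝ)) Filter.atTop Filter.atTop :=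
    tendsto_natCast_atTop_atTop.comp hφ.tendsto_atTop
  have hc0 : Filter.Tendsto (fun j => ((φ j : ℝ))⁻¹ • (w (φ j) - w 0)) Filter.atTop (nhds 0) := by
    have hgtend : Filter.Tendsto (fun j => ((φ j : ℝ))⁻¹ * (2 * (M * ‖v‖)))
        Filter.atTop (nhds 0) := by
      have := (hφtop.inv_tendsto_atTop).mul_const (2 * (M * ‖v‖))
      simpa using this
    refine squeeze_zero_norm (fun j => ?_) hgtend
    ·
      rw [norm_smul, Real.norm_eq_abs, abs_inv, Nat.abs_cast]
      refine mul_le_mul_of_nonneg_left ?_ (by positivity)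
      calc ‖w (φ j) - w 0‖ ≤ ‖w (φ j)‖ + ‖w 0‖ := norm_sub_le _ _
        _ ≤ M * ‖v‖ + M * ‖v‖ := add_le_add (hwnorm _) (hwnorm _)
        _ = 2 * (M * ‖v‖) := by ring
  have hfix : ε • T wlim = wlim := by
    have h1 : Filter.Tendsto (fun j => ε • T (A (φ j))) Filter.atTop (nhds (ε • T wlim)) :=
      (hScont.tendsto wlim).comp hlim
    have h2 : Filter.Tendsto (fun j => ε • T (A (φ j))) Filter.atTop (nhds wlim) := by
      have heq : (fun j => ε • T (A (φ j)))
          = fun j => A (φ j) + ((φ j : ℝ))⁻¹ • (w (φ j) - w 0) := by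
        funext j; exact hA_eq (φ j)
      rw [heq]
      simpa using hlim.add hc0
    exact tendsto_nhds_unique h1 h2
  -- the limit lies in C
  obtain ⟨r, hr, hball⟩ := Metric.isOpen_iff.mp hCo v hvC
  have hballC : ∀ n : ℕ, 1 ≤ n → ∀ y : Fin (d + 1) → ℝ, ‖y - A n‖ < r / M → y ∈ C := by
    intro n hn y hy
    set e : Fin (d + 1) → ℝ := y - A n with hedef
    set z : ℕ → (Fin (d + 1) → ℝ) := fun k => v + ε ^ k • ((g ^ (-(k : ℤ)) : (Module.End ℝ (Fin (d + 1) → ℝ))ˣ) :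
      Module.End ℝ (Fin (d + 1) → ℝ)) e with hzdef
    have hzC : ∀ k, z k ∈ C := by
      intro k
      apply hball
      rw [Metric.mem_ball, dist_eq_norm, hzdef]
      simp only [add_sub_cancel_left]
      calc ‖ε ^ k • ((g ^ (-(k : ℤ)) : (Module.End ℝ (Fin (d + 1) → ℝ))ˣ) : Module.End ℝ (Fin (d + 1) → ℝ)) e‖
          ≤ M * ‖e‖ := hnormzpow k e
        _ < M * (r / M) := by
            exact mul_lt_mul_of_pos_left hy hM0
        _ = r := by field_simp
    have hkey : ∀ k : ℕ, ε ^ k • ((g ^ (k : ℤ) : (Module.End ℝ (Fin (d + 1) → ℝ))ˣ) : Module.End ℝ (Fin (d + 1) → ℝ)) (z k)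
        = w k + e := by
      intro k
      have hcancel : ((g ^ (k : ℤ) : (Module.End ℝ (Fin (d + 1) → ℝ))ˣ) : Module.End ℝ (Fin (d + 1) → ℝ))
          (((g ^ (-(k : ℤ)) : (Module.End ℝ (Fin (d + 1) → ℝ))ˣ) : Module.End ℝ (Fin (d + 1) → ℝ)) e) = e := by
        rw [← Module.End.mul_apply, ← Units.val_mul, ← zpow_add]
        simp
      have hee : (ε ^ k) * (ε ^ k) = 1 := by
        rw [← mul_pow, hε2, one_pow]
      rw [hzdef]
      simp only [map_add, map_smul, smul_add, hcancel, hwdef]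
      rw [smul_smul, hee, one_smul]
    have hyform : y = ∑ k ∈ Finset.range n, (n : ℝ)⁻¹ •
        (ε ^ k • ((g ^ (k : ℤ) : (Module.End ℝ (Fin (d + 1) → ℝ))ˣ) : Module.End ℝ (Fin (d + 1) → ℝ)) (z k)) := by
      have hsum : ∑ k ∈ Finset.range n, (n : ℝ)⁻¹ •
          (ε ^ k • ((g ^ (k : ℤ) : (Module.End ℝ (Fin (d + 1) → ℝ))ˣ) : Module.End ℝ (Fin (d + 1) → ℝ)) (z k))
          = (n : ℝ)⁻¹ • ∑ k ∈ Finset.range n, (w k + e) := by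
        rw [Finset.smul_sum]
        exact Finset.sum_congr rfl fun k _ => by rw [hkey k]
      rw [hsum, Finset.sum_add_distrib, Finset.sum_const, Finset.card_range, smul_add]
      have hn0 : (n : ℝ) ≠ 0 := (Nat.cast_pos.mpr hn).ne'
      rw [← Nat.cast_smul_eq_nsmul ℝ, smul_smul, inv_mul_cancel₀ hn0, one_smul]
      simp only [hedef, hAdef]
      abel
    rw [hyform]
    refine hCc.sum_mem (fun k _ => by positivity) ?_ (fun k _ => hiter (z k) (hzC k) k)
    rw [Finset.sum_const, Finset.card_range, nsmul_eq_mul]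
    field_simp
  have hwlimC : wlim ∈ C := by
    have hrM : 0 < r / M := div_pos hr hM0
    obtain ⟨J, hJ⟩ := (Metric.tendsto_atTop.mp hlim) (r / M) hrM
    set j := max J 1 with hjdef
    have h1 : 1 ≤ φ j := le_trans (le_max_right J 1) (hφ.le_apply)
    have h2 : dist (A (φ j)) wlim < r / M := hJ j (le_max_left J 1)
    exact hballC (φ j) h1 wlim (by rw [← dist_eq_norm']; exact h2)
  -- conclude
  have hwlim0 : wlim ≠ 0 := hne0 wlim hwlimC
  have hTw : T wlim = ε • wlim := by
    have := congrArg (fun y => ε • y) hfix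
    rw [smul_smul, hε2, one_smul] at this
    exact this
  refine ⟨Projectivization.mk ℝ wlim hwlim0, by rw [hΩC]; exact ⟨wlim, hwlim0, hwlimC, rfl⟩, ?_⟩
  rw [Projectivization.map_mk, Projectivization.mk_eq_mk_iff]
  refine ⟨⟨ε, ε, hε2, hε2⟩, ?_⟩
  show ε • wlim = T wlim
  rw [hTw]
end

section
/- Let Ω be a properly convex open subset of the projective plane ℝP². If the metric space (Ω, d_Ω) with the Hilbert metric is Gromov-hyperbolic, then Ω is strictly convex (its boundary contains no nontrivial segment). -/
/-- `dfun` is the Hilbert distance on the properly convex (bounded open convex) set `Ω ⊆ ℝ^d`: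
`dfun x x = 0` and for `x ≠ y` in `Ω`, `dfun x y = (1/2) log((|py|·|qx|)/(|px|·|qy|))` where
`p, q` are the intersection points of the line `(xy)` with `∂Ω`, `x` lying between `p` and `y`
and `y` between `x` and `q`. -/
def IsHilbertDist {d : ℕ} (Ω : Set (EuclideanSpace ℝ (Fin d)))
    (dfun : EuclideanSpace ℝ (Fin d) → EuclideanSpace ℝ (Fin d) → ℝ) : Prop :=
  (∀ x ∈ Ω, dfun x x = 0) ∧
  ∀ x ∈ Ω, ∀ y ∈ Ω, x ≠ y →
    ∃ p q, p ∈ frontier Ω ∧ q ∈ frontier Ω ∧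
      x ∈ openSegment ℝ p y ∧ y ∈ openSegment ℝ x q ∧
      dfun x y = (1 / 2) * Real.log ((dist p y * dist q x) / (dist p x * dist q y))

open Real Filter Set

lemma gt_of_small {δ c m a : ℝ} (hc : 0 < c) (hm : c/2 < m) (ha : 0 < a)
    (haa : a < (c/2)/Real.exp (2*δ)) : δ < (1/2) * Real.log (1 + m/a) := by
  have hE : (0:ℝ) < Real.exp (2*δ) := Real.exp_pos _
  have h1 : Real.exp (2*δ) < m / a := by
    rw [lt_div_iff₀ hE] at haa
    rw [lt_div_iff₀ ha]
    nlinarith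
  have hpos : (0:ℝ) < 1 + m / a := by
    have := div_pos (by linarith : (0:ℝ) < m) ha; linarith
  have h2 : 2*δ < Real.log (1 + m/a) := by
    rw [Real.lt_log_iff_exp_lt hpos]
    linarith
  linarith

lemma half_log_lb {a b m v : ℝ} (ha : 0 < a) (hb : 0 < b) (hm : 0 < m)
    (hv : v = (1/2) * Real.log (((a+m)*(m+b))/(a*b))) :
    (1/2) * Real.log (1 + m/a) ≤ v ∧ (1/2) * Real.log (1 + m/b) ≤ v := by
  have hma := div_pos hm ha
  have hmb := div_pos hm hb
  have key : ((a+m)*(m+b))/(a*b) = (1+m/a)*(1+m/b) := by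
    have h1 : (1+m/a) = (a+m)/a := by rw [add_div, div_self ha.ne']
    have h2 : (1+m/b) = (m+b)/b := by rw [add_div, div_self hb.ne']; ring
    rw [h1, h2, div_mul_div_comm]
  rw [hv, key]
  constructor <;> gcongr (1/2) * Real.log ?_ <;> nlinarith

lemma hilbert_pair {d : ℕ} {Ω : Set (EuclideanSpace ℝ (Fin d))} (ho : IsOpen Ω)
    {dfun} (hd : IsHilbertDist Ω dfun) {u w : EuclideanSpace ℝ (Fin d)}
    (hu : u ∈ Ω) (hw : w ∈ Ω) (hne : u ≠ w) :
    ∃ P Q, P ∈ frontier Ω ∧ Q ∈ frontier Ω ∧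
      (∃ b : ℝ, 0 < b ∧ b ≤ 1 ∧ u = (1-b) • P + b • w ∧ dist P u = b * dist P w) ∧
      (∃ k : ℝ, 0 ≤ k ∧ Q - w = k • (w - u) ∧ dist Q w = k * dist u w) ∧
      (1/2) * Real.log (1 + dist u w / dist P u) ≤ dfun u w ∧
      (1/2) * Real.log (1 + dist u w / dist Q w) ≤ dfun u w := by
  obtain ⟨P, Q, hPf, hQf, hseg1, hseg2, heq⟩ := hd.2 u hu w hw hne
  have hPno : P ∉ Ω := fun h => ((ho.frontier_eq ▸ hPf).2 h)
  have hQno : Q ∉ Ω := fun h => ((ho.frontier_eq ▸ hQf).2 h)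
  have haP : 0 < dist P u := dist_pos.2 (fun h => hPno (h ▸ hu))
  have hbQ : 0 < dist Q w := dist_pos.2 (fun h => hQno (h ▸ hw))
  have hm : 0 < dist u w := dist_pos.2 hne
  -- distance additivity
  have hPw : dist P u + dist u w = dist P w :=
    dist_add_dist_of_mem_segment (openSegment_subset_segment ℝ _ _ hseg1)
  have hQu : dist u w + dist w Q = dist u Q :=
    dist_add_dist_of_mem_segment (openSegment_subset_segment ℝ _ _ hseg2)
  -- rewrite the formula
  have heq' : dfun u w = (1/2) * Real.log
      (((dist P u + dist u w) * (dist u w + dist Q w)) / (dist P u * dist Q w)) := by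
    rw [heq, hPw]
    rw [dist_comm Q u, ← hQu, dist_comm w Q]
  have hlb := half_log_lb haP hbQ hm heq'
  -- b package
  obtain ⟨a1, b1, ha1, hb1, hab1, hrep1⟩ := hseg1
  have ha1' : a1 = 1 - b1 := by linarith
  have hurep : u = (1-b1) • P + b1 • w := by rw [← hrep1, ha1']
  have hdiff : u - P = b1 • (w - P) := by rw [hurep]; module
  have hdPu : dist P u = b1 * dist P w := by
    rw [dist_comm P u, dist_comm P w, dist_eq_norm, dist_eq_norm, hdiff, norm_smul,
      Real.norm_eq_abs, abs_of_pos hb1]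
  -- k package
  obtain ⟨a2, b2, ha2, hb2, hab2, hrep2⟩ := hseg2
  have hk : b2 • (Q - w) = a2 • (w - u) := by
    rw [← hrep2]; match_scalars
    · linear_combination (-b2) * hab2
    · linear_combination (-a2) * hab2
  have hQw : Q - w = (a2/b2) • (w - u) := by
    rw [div_eq_inv_mul, ← smul_smul, ← hk, smul_smul, inv_mul_cancel₀ hb2.ne', one_smul]
  have hdQw : dist Q w = (a2/b2) * dist u w := by
    rw [dist_eq_norm, dist_eq_norm', hQw, norm_smul, Real.norm_eq_abs,
      abs_of_pos (div_pos ha2 hb2)]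
  exact ⟨P, Q, hPf, hQf, ⟨b1, hb1, by linarith, hurep, hdPu⟩,
    ⟨a2/b2, (div_pos ha2 hb2).le, hQw, hdQw⟩, hlb.1, hlb.2⟩

lemma ball_combo {d : ℕ} {Ω : Set (EuclideanSpace ℝ (Fin d))} (ho : IsOpen Ω) (hc : Convex ℝ Ω)
    {x y : EuclideanSpace ℝ (Fin d)} (hx : x ∈ closure Ω) {ρ : ℝ} (hρ : 0 < ρ)
    {b : ℝ} (hb : 0 < b) (hb1 : b ≤ 1)
    (hball : ∀ z', dist z' y < ρ → z' ∈ Ω) :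
    ∀ z, dist z ((1-b) • x + b • y) < b * ρ → z ∈ Ω := by
  intro z hz
  set v := (1-b) • x + b • y with hv
  set yz := y + b⁻¹ • (z - v) with hyz
  have h1 : dist yz y < ρ := by
    rw [dist_eq_norm]
    have : yz - y = b⁻¹ • (z - v) := by rw [hyz]; abel
    rw [this, norm_smul, Real.norm_eq_abs, abs_of_pos (inv_pos.2 hb)]
    rw [dist_eq_norm] at hz
    calc b⁻¹ * ‖z - v‖ < b⁻¹ * (b * ρ) := by
          exact mul_lt_mul_of_pos_left hz (inv_pos.2 hb)
      _ = ρ := by field_simp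
  have hyzΩ : yz ∈ Ω := hball _ h1
  have hrep : z = b • yz + (1-b) • x := by
    rw [hyz, hv]; rw [smul_add, smul_smul, mul_inv_cancel₀ hb.ne', one_smul]; abel
  have : z ∈ interior Ω := by
    rw [hrep]
    exact hc.combo_interior_closure_mem_interior (ho.interior_eq.symm ▸ hyzΩ) hx hb
      (by linarith) (by ring)
  rwa [ho.interior_eq] at this

lemma side_core {Ω : Set (EuclideanSpace ℝ (Fin 2))} (ho : IsOpen Ω) (hc : Convex ℝ Ω)
    {dfun : EuclideanSpace ℝ (Fin 2) → EuclideanSpace ℝ (Fin 2) → ℝ}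
    (hd : IsHilbertDist Ω dfun)
    {D : ℝ} (hD : ∀ x ∈ closure Ω, ∀ y ∈ closure Ω, dist x y ≤ D)
    {o : EuclideanSpace ℝ (Fin 2)} (hoΩ : o ∈ Ω) {ρ : ℝ} (hρ : 0 < ρ)
    (hball : Metric.ball o ρ ⊆ Ω)
    {s E : EuclideanSpace ℝ (Fin 2)} (hs : s ∈ frontier Ω) (hE : E ∈ closure Ω)
    (hsE : s ≠ E)
    (hray : ∀ r : ℝ, 0 ≤ r → E + r • (E - s) ∈ frontier Ω → r • (E - s) = 0)
    {δ : ℝ} {τ μ : ℕ → ℝ} (hτ : ∀ n, τ n ∈ Set.Ioo (0:ℝ) 1)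
    (hμ : ∀ n, μ n ∈ Set.Ioc (0:ℝ) 1)
    (hτ0 : Filter.Tendsto τ Filter.atTop (nhds 0))
    {μs : ℝ} (hμs : μs ∈ Set.Icc (0:ℝ) 1)
    (hμlim : Filter.Tendsto μ Filter.atTop (nhds μs))
    (hle : ∀ n, dfun ((1 - τ n) • s + τ n • o) ((1 - μ n) • E + μ n • o) ≤ δ) : False := by
  have hoint : o ∈ interior Ω := ho.interior_eq.symm ▸ hoΩ
  have hscl : s ∈ closure Ω := frontier_subset_closure hs
  have hsnΩ : s ∉ Ω := fun h => (ho.frontier_eq ▸ hs).2 h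
  set u : ℕ → EuclideanSpace ℝ (Fin 2) := fun n => (1 - τ n) • s + τ n • o with hu_def
  set w : ℕ → EuclideanSpace ℝ (Fin 2) := fun n => (1 - μ n) • E + μ n • o with hw_def
  have hu_mem : ∀ n, u n ∈ Ω := by
    intro n
    have h := hc.combo_interior_closure_mem_interior (a := τ n) (b := 1 - τ n) hoint hscl
      (hτ n).1 (by linarith [(hτ n).2.le]) (by ring)
    rw [ho.interior_eq] at h
    have : u n = τ n • o + (1 - τ n) • s := by rw [hu_def]; abel
    rwa [this]
  have hw_mem : ∀ n, w n ∈ Ω := by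
    intro n
    have h := hc.combo_interior_closure_mem_interior (a := μ n) (b := 1 - μ n) hoint hE
      (hμ n).1 (by linarith [(hμ n).2]) (by ring)
    rw [ho.interior_eq] at h
    have : w n = μ n • o + (1 - μ n) • E := by rw [hw_def]; abel
    rwa [this]
  have hD0 : 0 ≤ D := le_trans dist_nonneg (hD o (subset_closure hoΩ) o (subset_closure hoΩ))
  -- limits
  have husub : ∀ n, u n - s = τ n • (o - s) := by intro n; rw [hu_def]; module
  have hulim : Tendsto u atTop (nhds s) := by
    have h1 : Tendsto (fun n => s + τ n • (o - s)) atTop (nhds (s + (0:ℝ) • (o - s))) :=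
      tendsto_const_nhds.add (hτ0.smul_const (o - s))
    simp only [zero_smul, add_zero] at h1
    convert h1 using 2 with n
    have := husub n
    rw [eq_add_of_sub_eq (husub n)]; abel
  set ws : EuclideanSpace ℝ (Fin 2) := (1 - μs) • E + μs • o with hws_def
  have hwlim : Tendsto w atTop (nhds ws) := by
    have h1 : Tendsto (fun n => E + μ n • (o - E)) atTop (nhds (E + μs • (o - E))) :=
      tendsto_const_nhds.add (hμlim.smul_const (o - E))
    have h2 : ∀ n, w n = E + μ n • (o - E) := by intro n; rw [hw_def]; module
    have h3 : ws = E + μs • (o - E) := by rw [hws_def]; module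
    rw [h3]
    convert h1 using 2 with n
    exact h2 n
  have hdistus : ∀ n, dist s (u n) = τ n * ‖o - s‖ := by
    intro n
    rw [dist_comm, dist_eq_norm, husub n, norm_smul, Real.norm_eq_abs, abs_of_pos (hτ n).1]
  -- c > 0
  have hc0 : 0 < dist s ws := by
    rcases eq_or_lt_of_le hμs.1 with h0 | h0
    · have : ws = E := by rw [hws_def, ← h0]; simp
      rw [this]; exact dist_pos.2 hsE
    · have hwsΩ : ws ∈ Ω := by
        have h := hc.combo_interior_closure_mem_interior (a := μs) (b := 1 - μs) hoint hE h0
          (by linarith [hμs.2]) (by ring)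
        rw [ho.interior_eq] at h
        have : ws = μs • o + (1 - μs) • E := by rw [hws_def]; abel
        rwa [this]
      exact dist_pos.2 (fun h => hsnΩ (h ▸ hwsΩ))
  set c := dist s ws with hc_def
  have hev_m : ∀ᶠ n in atTop, c/2 < dist (u n) (w n) := by
    have hdm : Tendsto (fun n => dist (u n) (w n)) atTop (nhds c) := by
      have := hulim.dist hwlim; exact this
    exact hdm.eventually (eventually_gt_nhds (by linarith))
  have hRpos : (0:ℝ) < (c/2)/Real.exp (2*δ) := by positivity
  rcases eq_or_lt_of_le hμs.1 with hμ0 | hμpos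
  · -- case μs = 0 : ws = E
    have hwsE : ws = E := by rw [hws_def, ← hμ0]; simp
    obtain ⟨N, hN⟩ := eventually_atTop.1 hev_m
    have hne' : ∀ n, u (n+N) ≠ w (n+N) := by
      intro n
      have h := hN (n+N) (by omega)
      exact dist_pos.1 (lt_trans (by linarith) h)
    have H := fun n => hilbert_pair ho hd (hu_mem (n+N)) (hw_mem (n+N)) (hne' n)
    choose P Q hPf hQf hbpkg hkpkg hlbP hlbQ using H
    choose k hk0 hkeq hkdist using hkpkg
    have hQnΩ : ∀ n, Q n ∉ Ω := fun n h => (ho.frontier_eq ▸ hQf n).2 h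
    have hQwpos : ∀ n, 0 < dist (Q n) (w (n+N)) :=
      fun n => dist_pos.2 (fun h => hQnΩ n (h ▸ hw_mem (n+N)))
    have hmub : ∀ n, dist (u (n+N)) (w (n+N)) ≤ D :=
      fun n => hD _ (subset_closure (hu_mem _)) _ (subset_closure (hw_mem _))
    have hQwub : ∀ n, dist (Q n) (w (n+N)) ≤ D :=
      fun n => hD _ (frontier_subset_closure (hQf n)) _ (subset_closure (hw_mem _))
    have hkmem : ∀ n, k n ∈ Set.Icc (0:ℝ) (D/(c/2)) := by
      intro n
      refine ⟨hk0 n, ?_⟩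
      have h1 := hkdist n
      have h2 := hN (n+N) (by omega)
      have h3 : k n * (c/2) ≤ k n * dist (u (n+N)) (w (n+N)) :=
        mul_le_mul_of_nonneg_left h2.le (hk0 n)
      rw [← h1] at h3
      rw [le_div_iff₀ (by linarith : (0:ℝ) < c/2)]
      exact le_trans h3 (hQwub n)
    obtain ⟨κs, hκsmem, ψ, hψ, hκlim⟩ := (isCompact_Icc).tendsto_subseq hkmem
    have hulim' : Tendsto (fun j => u (ψ j + N)) atTop (nhds s) :=
      hulim.comp ((tendsto_add_atTop_nat N).comp hψ.tendsto_atTop)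
    have hwlim' : Tendsto (fun j => w (ψ j + N)) atTop (nhds E) := by
      have := hwlim.comp ((tendsto_add_atTop_nat N).comp hψ.tendsto_atTop)
      rwa [hwsE] at this
    have hQrep : ∀ n, Q n = w (n+N) + k n • (w (n+N) - u (n+N)) := by
      intro n
      have := sub_eq_iff_eq_add.1 (hkeq n)
      rw [this]; abel
    have hQlim : Tendsto (fun j => Q (ψ j)) atTop (nhds (E + κs • (E - s))) := by
      have h1 : Tendsto (fun j => w (ψ j + N) + (k (ψ j)) • (w (ψ j + N) - u (ψ j + N)))
          atTop (nhds (E + κs • (E - s))) :=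
        hwlim'.add (hκlim.smul (hwlim'.sub hulim'))
      convert h1 using 2 with j
      exact hQrep (ψ j)
    have hqfr : E + κs • (E - s) ∈ frontier Ω :=
      isClosed_frontier.mem_of_tendsto hQlim (Eventually.of_forall (fun j => hQf (ψ j)))
    have hκ0 : κs = 0 := by
      have h := hray κs hκsmem.1 hqfr
      rcases smul_eq_zero.1 h with h' | h'
      · exact h'
      · exact absurd (sub_eq_zero.1 h') (Ne.symm hsE)
    have hblim : Tendsto (fun j => dist (Q (ψ j)) (w (ψ j + N))) atTop (nhds 0) := by
      have h1 : Tendsto (fun j => k (ψ j) * D) atTop (nhds 0) := by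
        have := hκlim.mul_const D
        rwa [hκ0, zero_mul] at this
      refine squeeze_zero (fun j => dist_nonneg) (fun j => ?_) h1
      rw [hkdist (ψ j)]
      exact mul_le_mul_of_nonneg_left (hmub (ψ j)) (hk0 (ψ j))
    have hev : ∀ᶠ j in atTop, dist (Q (ψ j)) (w (ψ j + N)) < (c/2)/Real.exp (2*δ) :=
      hblim.eventually (eventually_lt_nhds hRpos)
    obtain ⟨j, hj⟩ := hev.exists
    have hgt := gt_of_small hc0 (hN (ψ j + N) (by omega)) (hQwpos (ψ j)) hj
    have := hlbQ (ψ j)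
    have := hle (ψ j + N)
    simp only [hu_def, hw_def] at *
    linarith
  · -- case μs > 0
    have hβlim : Tendsto (fun n => τ n * ‖o - s‖ / (μ n * ρ) * D) atTop (nhds 0) := by
      have h1 : Tendsto (fun n => τ n * ‖o - s‖) atTop (nhds 0) := by
        have := hτ0.mul_const ‖o - s‖; rwa [zero_mul] at this
      have h2 : Tendsto (fun n => μ n * ρ) atTop (nhds (μs * ρ)) := hμlim.mul_const ρ
      have h3 := (h1.div h2 (mul_pos hμpos hρ).ne').mul_const D
      rwa [zero_div, zero_mul] at h3
    have hev2 : ∀ᶠ n in atTop, τ n * ‖o - s‖ / (μ n * ρ) * D < (c/2)/Real.exp (2*δ) :=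
      hβlim.eventually (eventually_lt_nhds hRpos)
    obtain ⟨n, hm_n, hβ_n⟩ := (hev_m.and hev2).exists
    have hne_n : u n ≠ w n := dist_pos.1 (lt_trans (by linarith) hm_n)
    obtain ⟨P, Q2, hPf, hQf, ⟨b, hb0, hb1, hurep, hdPu⟩, _, hlbP, _⟩ :=
      hilbert_pair ho hd (hu_mem n) (hw_mem n) hne_n
    -- ball around w n
    have hballw : ∀ z', dist z' (w n) < μ n * ρ → z' ∈ Ω := by
      have := ball_combo ho hc hE hρ (hμ n).1 (hμ n).2
        (fun z' hz' => hball (Metric.mem_ball.2 hz'))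
      intro z' hz'
      exact this z' hz'
    -- ball around u n
    have hballu : ∀ z, dist z (u n) < b * (μ n * ρ) → z ∈ Ω := by
      have hPcl : P ∈ closure Ω := frontier_subset_closure hPf
      have := ball_combo ho hc hPcl (mul_pos (hμ n).1 hρ) hb0 hb1 hballw
      intro z hz
      apply this z
      rwa [← hurep]
    have hsb : b * (μ n * ρ) ≤ dist s (u n) := by
      by_contra hlt
      push_neg at hlt
      exact hsnΩ (hballu s hlt)
    have hble : b ≤ τ n * ‖o - s‖ / (μ n * ρ) := by
      rw [hdistus n] at hsb
      rw [le_div_iff₀ (mul_pos (hμ n).1 hρ)]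
      linarith
    have hPunΩ : P ∉ Ω := fun h => (ho.frontier_eq ▸ hPf).2 h
    have hPupos : 0 < dist P (u n) := dist_pos.2 (fun h => hPunΩ (h ▸ hu_mem n))
    have hPwub : dist P (w n) ≤ D :=
      hD _ (frontier_subset_closure hPf) _ (subset_closure (hw_mem n))
    have haub : dist P (u n) < (c/2)/Real.exp (2*δ) := by
      rw [hdPu]
      calc b * dist P (w n) ≤ (τ n * ‖o - s‖ / (μ n * ρ)) * D := by
            apply mul_le_mul hble hPwub dist_nonneg
            exact div_nonneg (mul_nonneg (hτ n).1.le (norm_nonneg _)) (mul_pos (hμ n).1 hρ).le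
        _ < (c/2)/Real.exp (2*δ) := hβ_n
    have hgt := gt_of_small hc0 hm_n hPupos haub
    have := hle n
    simp only [hu_def, hw_def] at *
    linarith

lemma side_false {Ω : Set (EuclideanSpace ℝ (Fin 2))} (ho : IsOpen Ω) (hc : Convex ℝ Ω)
    {dfun : EuclideanSpace ℝ (Fin 2) → EuclideanSpace ℝ (Fin 2) → ℝ}
    (hd : IsHilbertDist Ω dfun)
    {D : ℝ} (hD : ∀ x ∈ closure Ω, ∀ y ∈ closure Ω, dist x y ≤ D)
    {o : EuclideanSpace ℝ (Fin 2)} (hoΩ : o ∈ Ω) {ρ : ℝ} (hρ : 0 < ρ)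
    (hball : Metric.ball o ρ ⊆ Ω)
    {s E : EuclideanSpace ℝ (Fin 2)} (hs : s ∈ frontier Ω) (hE : E ∈ closure Ω)
    (hsE : s ≠ E)
    (hray : ∀ r : ℝ, 0 ≤ r → E + r • (E - s) ∈ frontier Ω → r • (E - s) = 0)
    {δ : ℝ} {τ μ : ℕ → ℝ} (hτ : ∀ n, τ n ∈ Set.Ioo (0:ℝ) 1)
    (hμ : ∀ n, μ n ∈ Set.Ioc (0:ℝ) 1)
    (hτ0 : Filter.Tendsto τ Filter.atTop (nhds 0))
    (hle : ∀ n, dfun ((1 - τ n) • s + τ n • o) ((1 - μ n) • E + μ n • o) ≤ δ) : False := by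
  obtain ⟨μs, hμsmem, ψ, hψ, hμlim⟩ :=
    (isCompact_Icc (a := (0:ℝ)) (b := 1)).tendsto_subseq (fun n => Ioc_subset_Icc_self (hμ n))
  exact side_core ho hc hd hD hoΩ hρ hball hs hE hsE hray (τ := τ ∘ ψ) (μ := μ ∘ ψ)
    (fun n => hτ (ψ n)) (fun n => hμ (ψ n)) (hτ0.comp hψ.tendsto_atTop) hμsmem hμlim
    (fun n => hle (ψ n))

set_option maxHeartbeats 1000000 in
/-- If the Hilbert metric of a properly convex open set `Ω ⊆ ℝP²` (realized as a bounded open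
convex subset of the plane) is Gromov-hyperbolic — every geodesic triangle, in particular
every triangle of straight segments, is `δ`-thin — then `Ω` is strictly convex: its boundary
contains no nontrivial segment. -/
theorem gromov_hyperbolic_implies_strictly_convex (Ω : Set (EuclideanSpace ℝ (Fin 2)))
    (ho : IsOpen Ω) (hc : Convex ℝ Ω) (hb : Bornology.IsBounded Ω) (hne : Ω.Nonempty)
    (dfun : EuclideanSpace ℝ (Fin 2) → EuclideanSpace ℝ (Fin 2) → ℝ)
    (hd : IsHilbertDist Ω dfun)
    (hhyp : ∃ δ : ℝ, 0 ≤ δ ∧ ∀ x ∈ Ω, ∀ y ∈ Ω, ∀ z ∈ Ω, ∀ u ∈ segment ℝ x y,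
      ∃ v ∈ segment ℝ y z ∪ segment ℝ z x, dfun u v ≤ δ) :
    ∀ p ∈ frontier Ω, ∀ q ∈ frontier Ω, segment ℝ p q ⊆ frontier Ω → p = q := by
  intro p hp q hq hseg
  by_contra hpq
  have hqp : q - p ≠ 0 := sub_ne_zero.2 (Ne.symm hpq)
  have hqpn : 0 < ‖q - p‖ := norm_pos_iff.2 hqp
  set φ : ℝ → EuclideanSpace ℝ (Fin 2) := fun t => p + t • (q - p) with hφ_def
  have hφinj : Function.Injective φ := by
    intro t₁ t₂ h
    have h2 : (t₁ - t₂) • (q - p) = 0 := by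
      have h1 : t₁ • (q - p) = t₂ • (q - p) := by
        have := h; simp only [hφ_def] at this
        exact add_left_cancel this
      rw [sub_smul, h1, sub_self]
    rcases smul_eq_zero.1 h2 with h' | h'
    · linarith [sub_eq_zero.1 h']
    · exact absurd h' hqp
  obtain ⟨D, hD⟩ := Metric.isBounded_iff.1 hb.closure
  obtain ⟨o, hoΩ⟩ := hne
  obtain ⟨ρ, hρ, hball⟩ := Metric.isOpen_iff.1 ho o hoΩ
  have hoint : o ∈ interior Ω := ho.interior_eq.symm ▸ hoΩ
  set T : Set ℝ := {t : ℝ | φ t ∈ closure Ω} with hT_def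
  have hφ0 : φ 0 = p := by simp [hφ_def]
  have hφ1 : φ 1 = q := by simp [hφ_def]
  have hT0 : (0:ℝ) ∈ T := by
    show φ 0 ∈ closure Ω
    rw [hφ0]; exact frontier_subset_closure hp
  have hT1 : (1:ℝ) ∈ T := by
    show φ 1 ∈ closure Ω
    rw [hφ1]; exact frontier_subset_closure hq
  have hcomb : ∀ (a b t₁ t₂ : ℝ), a + b = 1 →
      a • (φ t₁) + b • (φ t₂) = φ (a*t₁ + b*t₂) := by
    intro a b t₁ t₂ hab
    have hb' : b = 1 - a := by linarith
    subst hb'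
    simp only [hφ_def]
    module
  have hsegmem : ∀ t : ℝ, 0 ≤ t → t ≤ 1 → φ t ∈ frontier Ω := by
    intro t h0 h1
    apply hseg
    rw [segment_eq_image']
    exact ⟨t, ⟨h0, h1⟩, rfl⟩
  have hm_fr : φ (1/2) ∈ frontier Ω := hsegmem _ (by norm_num) (by norm_num)
  have hnotΩ : ∀ t : ℝ, φ t ∉ Ω := by
    intro t ht
    rcases le_or_gt t 1 with h1 | h1
    · rcases le_or_gt 0 t with h0 | h0
      · exact (ho.frontier_eq ▸ hsegmem t h0 h1).2 ht
      · -- t < 0 : p ∈ Ω, contradiction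
        set a : ℝ := 1/(1 - 2*t) with ha_def
        have hden : 0 < 1 - 2*t := by linarith
        have ha0 : 0 < a := by positivity
        have ha1 : a ≤ 1 := by rw [ha_def, div_le_one hden]; linarith
        have hcoeff : a*t + (1-a)*(1/2) = 0 := by
          rw [ha_def]; field_simp; ring
        have hmem := hc.combo_interior_closure_mem_interior (a := a) (b := 1-a)
          (ho.interior_eq.symm ▸ ht) (frontier_subset_closure hm_fr) ha0 (by linarith) (by ring)
        rw [hcomb a (1-a) t (1/2) (by ring), hcoeff, hφ0, ho.interior_eq] at hmem
        exact (ho.frontier_eq ▸ hp).2 hmem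
    · -- t > 1 : q ∈ Ω, contradiction
      set a : ℝ := 1/(2*t - 1) with ha_def
      have hden : 0 < 2*t - 1 := by linarith
      have ha0 : 0 < a := by positivity
      have ha1 : a ≤ 1 := by rw [ha_def, div_le_one hden]; linarith
      have hcoeff : a*t + (1-a)*(1/2) = 1 := by
        rw [ha_def]; field_simp; ring
      have hmem := hc.combo_interior_closure_mem_interior (a := a) (b := 1-a)
        (ho.interior_eq.symm ▸ ht) (frontier_subset_closure hm_fr) ha0 (by linarith) (by ring)
      rw [hcomb a (1-a) t (1/2) (by ring), hcoeff, hφ1, ho.interior_eq] at hmem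
      exact (ho.frontier_eq ▸ hq).2 hmem
  have hTfr : ∀ t ∈ T, φ t ∈ frontier Ω := by
    intro t ht
    rw [ho.frontier_eq]
    exact ⟨ht, hnotΩ t⟩
  have hTconv : Convex ℝ T := by
    intro t₁ h₁ t₂ h₂ a b ha hb hab
    have := hc.closure h₁ h₂ ha hb hab
    rw [hcomb a b t₁ t₂ hab] at this
    exact this
  have hφcont : Continuous φ := continuous_const.add (continuous_id.smul continuous_const)
  have hTclosed : IsClosed T := IsClosed.preimage hφcont isClosed_closure
  have hTsub : T ⊆ Set.Icc (-(D/‖q - p‖)) (D/‖q - p‖) := by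
    intro t ht
    have h1 : dist (φ t) p ≤ D := hD ht (frontier_subset_closure hp)
    have h2 : dist (φ t) p = |t| * ‖q - p‖ := by
      rw [dist_eq_norm]
      have : φ t - p = t • (q - p) := by simp [hφ_def]
      rw [this, norm_smul, Real.norm_eq_abs]
    have h3 : |t| ≤ D/‖q - p‖ := by
      rw [le_div_iff₀ hqpn]; rw [h2] at h1; linarith
    have := abs_le.1 h3
    exact ⟨this.1, this.2⟩
  have hTcomp : IsCompact T := IsCompact.of_isClosed_subset isCompact_Icc hTclosed hTsub
  have hTconn : IsConnected T := ⟨⟨0, hT0⟩, hTconv.isPreconnected⟩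
  have hTIcc : T = Set.Icc (sInf T) (sSup T) := eq_Icc_of_connected_compact hTconn hTcomp
  set tA := sInf T with htA_def
  set tB := sSup T with htB_def
  have htA0 : tA ≤ 0 := (hTIcc ▸ hT0).1
  have htB1 : 1 ≤ tB := (hTIcc ▸ hT1).2
  set tm := (tA + tB)/2 with htm_def
  have htAm : tA < tm := by rw [htm_def]; linarith
  have htmB : tm < tB := by rw [htm_def]; linarith
  have htmT : tm ∈ T := by rw [hTIcc]; exact ⟨htAm.le, htmB.le⟩
  have htAT : tA ∈ T := by rw [hTIcc]; exact ⟨le_refl _, by linarith⟩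
  have htBT : tB ∈ T := by rw [hTIcc]; exact ⟨by linarith, le_refl _⟩
  set A := φ tA with hA_def
  set B := φ tB with hB_def
  set sm := φ tm with hsm_def
  have hsm_fr : sm ∈ frontier Ω := hTfr tm htmT
  have hA_cl : A ∈ closure Ω := frontier_subset_closure (hTfr tA htAT)
  have hB_cl : B ∈ closure Ω := frontier_subset_closure (hTfr tB htBT)
  have hsA : sm ≠ A := fun h => absurd (hφinj h) (ne_of_gt htAm)
  have hsB : sm ≠ B := fun h => absurd (hφinj h) (ne_of_lt htmB)
  have hφshift : ∀ (x c : ℝ), φ x + c • (q - p) = φ (x + c) := by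
    intro x c; simp only [hφ_def]; module
  have hrayA : ∀ r : ℝ, 0 ≤ r → A + r • (A - sm) ∈ frontier Ω → r • (A - sm) = 0 := by
    intro r hr hfr
    have hAs : A - sm = (tA - tm) • (q - p) := by simp only [hA_def, hsm_def, hφ_def]; module
    have hpt : A + r • (A - sm) = φ (tA + r*(tA - tm)) := by
      rw [hAs, smul_smul, hA_def, hφshift]
    rw [hpt] at hfr
    have hmem : tA + r*(tA - tm) ∈ T := frontier_subset_closure hfr
    rw [hTIcc] at hmem
    have h1 : 0 ≤ r*(tA - tm) := by linarith [hmem.1]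
    have h2 : r*(tA - tm) ≤ 0 := mul_nonpos_of_nonneg_of_nonpos hr (by linarith)
    have h3 : r = 0 := by
      rcases mul_eq_zero.1 (le_antisymm h2 h1) with h' | h'
      · exact h'
      · linarith
    rw [h3, zero_smul]
  have hrayB : ∀ r : ℝ, 0 ≤ r → B + r • (B - sm) ∈ frontier Ω → r • (B - sm) = 0 := by
    intro r hr hfr
    have hBs : B - sm = (tB - tm) • (q - p) := by simp only [hB_def, hsm_def, hφ_def]; module
    have hpt : B + r • (B - sm) = φ (tB + r*(tB - tm)) := by
      rw [hBs, smul_smul, hB_def, hφshift]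
    rw [hpt] at hfr
    have hmem : tB + r*(tB - tm) ∈ T := frontier_subset_closure hfr
    rw [hTIcc] at hmem
    have h1 : r*(tB - tm) ≤ 0 := by linarith [hmem.2]
    have h2 : 0 ≤ r*(tB - tm) := mul_nonneg hr (by linarith)
    have h3 : r = 0 := by
      rcases mul_eq_zero.1 (le_antisymm h1 h2) with h' | h'
      · exact h'
      · linarith
    rw [h3, zero_smul]
  have hsm_mid : sm = (1/2:ℝ) • A + (1/2:ℝ) • B := by
    rw [hA_def, hB_def, hsm_def, hcomb (1/2) (1/2) tA tB (by norm_num)]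
    congr 1
    rw [htm_def]; ring
  -- sequences
  set τ : ℕ → ℝ := fun n => 1/(n+2) with hτ_def
  have hτmem : ∀ n, τ n ∈ Set.Ioo (0:ℝ) 1 := by
    intro n
    constructor
    · positivity
    · rw [hτ_def]
      have h2 : (1:ℝ) < (n:ℝ) + 2 := by
        have : (0:ℝ) ≤ (n:ℝ) := Nat.cast_nonneg n
        linarith
      rw [div_lt_one (by linarith)]
      exact h2
  have hτ0 : Filter.Tendsto τ Filter.atTop (nhds 0) := by
    have h1 := (tendsto_one_div_add_atTop_nhds_zero_nat (𝕜 := ℝ)).comp (tendsto_add_atTop_nat 1)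
    have h2 : τ = (fun n : ℕ => 1/((n:ℝ)+1)) ∘ (fun n : ℕ => n + 1) := by
      funext n
      simp only [hτ_def, Function.comp_apply]
      push_cast
      ring
    rw [h2]
    exact h1
  set x : ℕ → EuclideanSpace ℝ (Fin 2) := fun n => (1 - τ n) • A + τ n • o with hx_def
  set y : ℕ → EuclideanSpace ℝ (Fin 2) := fun n => (1 - τ n) • B + τ n • o with hy_def
  set u : ℕ → EuclideanSpace ℝ (Fin 2) := fun n => (1 - τ n) • sm + τ n • o with hu_def
  have hmemcombo : ∀ (z : EuclideanSpace ℝ (Fin 2)), z ∈ closure Ω → ∀ n,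
      (1 - τ n) • z + τ n • o ∈ Ω := by
    intro z hz n
    have h := hc.combo_interior_closure_mem_interior (a := τ n) (b := 1 - τ n) hoint hz
      (hτmem n).1 (by linarith [(hτmem n).2.le]) (by ring)
    rw [ho.interior_eq] at h
    have : (1 - τ n) • z + τ n • o = τ n • o + (1 - τ n) • z := by abel
    rwa [this]
  have hx_mem : ∀ n, x n ∈ Ω := fun n => hmemcombo A hA_cl n
  have hy_mem : ∀ n, y n ∈ Ω := fun n => hmemcombo B hB_cl n
  have hu_seg : ∀ n, u n ∈ segment ℝ (x n) (y n) := by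
    intro n
    refine ⟨1/2, 1/2, by norm_num, by norm_num, by norm_num, ?_⟩
    rw [hx_def, hy_def, hu_def]
    simp only
    rw [hsm_mid]
    module
  obtain ⟨δ, hδ0, hδ⟩ := hhyp
  -- convert the thin-triangle data
  have Hv : ∀ n, ∃ μ ∈ Set.Ioc (0:ℝ) 1,
      (dfun (u n) ((1-μ) • A + μ • o) ≤ δ ∨ dfun (u n) ((1-μ) • B + μ • o) ≤ δ) := by
    intro n
    obtain ⟨v, hv, hvle⟩ := hδ (x n) (hx_mem n) (y n) (hy_mem n) o hoΩ (u n) (hu_seg n)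
    rcases hv with hv | hv
    · -- v ∈ segment (y n) o : B side
      obtain ⟨a, b, ha, hb, hab, hveq⟩ := hv
      refine ⟨1 - a*(1 - τ n), ⟨?_, ?_⟩, Or.inr ?_⟩
      · have h1 : a ≤ 1 := by linarith
        have h2 : a*(1 - τ n) < 1 := by nlinarith [(hτmem n).1, (hτmem n).2]
        linarith
      · nlinarith [(hτmem n).2.le]
      · have : (1 - (1 - a*(1 - τ n))) • B + (1 - a*(1 - τ n)) • o = v := by
          rw [← hveq, hy_def]
          simp only
          match_scalars <;>
            first
              | ring1
              | linear_combination hab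
              | linear_combination (-1 : ℝ) * hab
              | linear_combination (1 - τ n) * hab
              | linear_combination (τ n - 1) * hab
              | linear_combination (τ n) * hab
              | linear_combination (-(τ n)) * hab
              | linarith [hab]
        rw [this]
        exact hvle
    · -- v ∈ segment o (x n) : A side
      obtain ⟨a, b, ha, hb, hab, hveq⟩ := hv
      refine ⟨1 - b*(1 - τ n), ⟨?_, ?_⟩, Or.inl ?_⟩
      · have h1 : b ≤ 1 := by linarith
        have h2 : b*(1 - τ n) < 1 := by nlinarith [(hτmem n).1, (hτmem n).2]
        linarith
      · nlinarith [(hτmem n).2.le]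
      · have : (1 - (1 - b*(1 - τ n))) • A + (1 - b*(1 - τ n)) • o = v := by
          rw [← hveq, hx_def]
          simp only
          match_scalars <;>
            first
              | ring1
              | linear_combination hab
              | linear_combination (-1 : ℝ) * hab
              | linear_combination (1 - τ n) * hab
              | linear_combination (τ n - 1) * hab
              | linear_combination (τ n) * hab
              | linear_combination (-(τ n)) * hab
              | linarith [hab]
        rw [this]
        exact hvle
  choose μf hμf hor using Hv
  have hfreq : (∃ᶠ n in Filter.atTop, dfun (u n) ((1-μf n) • A + μf n • o) ≤ δ) ∨
      (∃ᶠ n in Filter.atTop, dfun (u n) ((1-μf n) • B + μf n • o) ≤ δ) := by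
    rw [← Filter.frequently_or_distrib]
    exact Filter.Frequently.of_forall hor
  rcases hfreq with hfreq | hfreq
  · obtain ⟨ψ, hψ, hP⟩ := Filter.extraction_of_frequently_atTop hfreq
    exact side_false ho hc hd hD hoΩ hρ hball hsm_fr hA_cl hsA hrayA
      (τ := τ ∘ ψ) (μ := μf ∘ ψ) (fun n => hτmem (ψ n)) (fun n => hμf (ψ n))
      (hτ0.comp hψ.tendsto_atTop) (fun n => hP n)
  · obtain ⟨ψ, hψ, hP⟩ := Filter.extraction_of_frequently_atTop hfreq
    exact side_false ho hc hd hD hoΩ hρ hball hsm_fr hB_cl hsB hrayB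
      (τ := τ ∘ ψ) (μ := μf ∘ ψ) (fun n => hτmem (ψ n)) (fun n => hμf (ψ n))
      (hτ0.comp hψ.tendsto_atTop) (fun n => hP n)
end
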